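/- arXiv:0905.3703 — 5 statements merged into one kernel-verified Lean document; each statement's English description precedes it below -/
import Mathlib

section
/- Let K and L be compact convex sets in ℝⁿ and let ψ : ℝⁿ → ℝⁿ be a nonsingular (invertible) linear transformation. Then the orthogonal projection L_u contains a translate of K_u for every unit vector u if and only if (ψL)_u contains a translate of (ψK)_u for every unit vector u. -/
open scoped Pointwise RealInnerProductSpace
noncomputable section

/-- Abbreviation for n-dimensional Euclidean space. -/
abbrev Euc (n : ℕ) := EuclideanSpace ℝ (Fin n)

/-- The translate K + v of a set K by a vector v. -/
def transl {n : ℕ} (K : Set (Euc n)) (v : Euc n) : Set (Euc n) := (fun x => x + v) '' K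

/-- Orthogonal projection of a set onto a subspace ξ, viewed inside the ambient space. -/
def projSet {n : ℕ} (ξ : Submodule ℝ (Euc n)) (K : Set (Euc n)) : Set (Euc n) :=
  (fun x => (ξ.orthogonalProjection x : Euc n)) '' K

/-- A simplicial family of size m+1: distinct unit vectors spanning an m-dimensional
subspace, some positive combination of which vanishes (the outer unit normals of an
m-dimensional simplex). -/
def SimplicialFamily {n : ℕ} (m : ℕ) (u : Fin (m + 1) → Euc n) : Prop :=
  Function.Injective u ∧ (∀ i, ‖u i‖ = 1) ∧
    Module.finrank ℝ (Submodule.span ℝ (Set.range u)) = m ∧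
    ∃ c : Fin (m + 1) → ℝ, (∀ i, 0 < c i) ∧ ∑ i, c i • u i = 0

/-- L is d-reliable: whenever every projection of L onto a d-dimensional subspace contains
a translate of the corresponding projection of a compact convex set K, L contains a
translate of K. -/
def DReliable {n : ℕ} (d : ℕ) (L : Set (Euc n)) : Prop :=
  ∀ K : Set (Euc n), IsCompact K → Convex ℝ K → K.Nonempty →
    (∀ ξ : Submodule ℝ (Euc n), Module.finrank ℝ ξ = d →
      ∃ w, transl (projSet ξ K) w ⊆ projSet ξ L) →
    ∃ v, transl K v ⊆ L

/-- x is a regular boundary point of L: exactly one outer unit normal at x. -/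
def IsRegularPoint {n : ℕ} (L : Set (Euc n)) (x : Euc n) : Prop :=
  x ∈ frontier L ∧ ∃! u : Euc n, ‖u‖ = 1 ∧ ∀ y ∈ L, ⟪y - x, u⟫ ≤ 0

/-- u is the (unique) outer unit normal to L at the regular boundary point x. -/
def IsNormalAtRegularPoint {n : ℕ} (L : Set (Euc n)) (x u : Euc n) : Prop :=
  x ∈ frontier L ∧ ‖u‖ = 1 ∧ (∀ y ∈ L, ⟪y - x, u⟫ ≤ 0) ∧
    ∀ w : Euc n, ‖w‖ = 1 → (∀ y ∈ L, ⟪y - x, w⟫ ≤ 0) → w = u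

/-- The support set of P in direction u. -/
def supportSet {n : ℕ} (P : Set (Euc n)) (u : Euc n) : Set (Euc n) :=
  {x ∈ P | ∀ y ∈ P, ⟪y, u⟫ ≤ ⟪x, u⟫}

/-- u is an outer unit facet normal of P: the support set of P in direction u is a face of
codimension 1 in the affine hull of P. -/
def IsFacetNormal {n : ℕ} (P : Set (Euc n)) (u : Euc n) : Prop :=
  ‖u‖ = 1 ∧ Module.finrank ℝ (vectorSpan ℝ (supportSet P u)) + 1
      = Module.finrank ℝ (vectorSpan ℝ P)

/-- S is a k-dimensional simplex: the convex hull of k+1 affinely independent points. -/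
def IsSimplexOfDim {n : ℕ} (k : ℕ) (S : Set (Euc n)) : Prop :=
  ∃ p : Fin (k + 1) → Euc n, AffineIndependent ℝ p ∧ S = convexHull ℝ (Set.range p)

/-- C is d-decomposable: a direct Minkowski sum of at least two nonempty compact convex
sets lying in complementary subspaces of dimension at most d. -/
def DDecomposable {n : ℕ} (d : ℕ) (C : Set (Euc n)) : Prop :=
  ∃ (m : ℕ) (ξ : Fin m → Submodule ℝ (Euc n)) (Cs : Fin m → Set (Euc n)),
    2 ≤ m ∧ iSupIndep ξ ∧ (⨆ i, ξ i) = ⊤ ∧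
    (∀ i, Module.finrank ℝ (ξ i) ≤ d) ∧
    (∀ i, (Cs i).Nonempty ∧ IsCompact (Cs i) ∧ Convex ℝ (Cs i) ∧ Cs i ⊆ (ξ i : Set (Euc n))) ∧
    C = ∑ i, Cs i

/-- C is a d-decomposable orthogonal simplex product: a direct Minkowski sum of simplices of
dimension at most d lying in mutually orthogonal complementary subspaces of dimension at
most d. -/
def OrthSimplexProduct {n : ℕ} (d : ℕ) (C : Set (Euc n)) : Prop :=
  ∃ (m : ℕ) (ξ : Fin m → Submodule ℝ (Euc n)) (Cs : Fin m → Set (Euc n)),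
    2 ≤ m ∧ iSupIndep ξ ∧ (⨆ i, ξ i) = ⊤ ∧
    (∀ i, Module.finrank ℝ (ξ i) ≤ d) ∧
    (∀ i j, i ≠ j → ∀ x ∈ ξ i, ∀ y ∈ ξ j, ⟪x, y⟫ = 0) ∧
    (∀ i, Cs i ⊆ (ξ i : Set (Euc n)) ∧ ∃ k ≤ d, IsSimplexOfDim k (Cs i)) ∧
    C = ∑ i, Cs i

lemma shadow_aux {n : ℕ} (K L : Set (Euc n)) (ψ : Euc n ≃ₗ[ℝ] Euc n)
    (h : ∀ u : Euc n, ‖u‖ = 1 →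
        ∃ w, transl (projSet (ℝ ∙ u)ᗮ K) w ⊆ projSet (ℝ ∙ u)ᗮ L) :
    ∀ u : Euc n, ‖u‖ = 1 →
        ∃ w, transl (projSet (ℝ ∙ u)ᗮ (⇑ψ '' K)) w ⊆ projSet (ℝ ∙ u)ᗮ (⇑ψ '' L) := by
  intro u hu
  have hu0 : u ≠ 0 := by intro h0; rw [h0] at hu; simp at hu
  set v0 : Euc n := ψ.symm u with hv0
  have hv00 : v0 ≠ 0 := by
    simp only [hv0, ne_eq, EmbeddingLike.map_eq_zero_iff]
    exact hu0
  set v : Euc n := ‖v0‖⁻¹ • v0 with hvdef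
  have hv : ‖v‖ = 1 := norm_smul_inv_norm hv00
  -- the linear map transporting shadows
  set P : Euc n →ₗ[ℝ] Euc n :=
    ((ℝ ∙ u)ᗮ).subtype.comp (Submodule.orthogonalProjection (ℝ ∙ u)ᗮ).toLinearMap with hP
  set g : Euc n →ₗ[ℝ] Euc n := P.comp ψ.toLinearMap with hg
  have hψv : (ψ : Euc n →ₗ[ℝ] Euc n) v = ‖v0‖⁻¹ • u := by
    simp [hvdef, hv0, map_smul]
  have key : ∀ S : Set (Euc n),
      projSet (ℝ ∙ u)ᗮ (⇑ψ '' S) = g '' (projSet (ℝ ∙ v)ᗮ S) := by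
    intro S
    unfold projSet
    rw [Set.image_image, Set.image_image]
    apply Set.image_congr'
    intro x
    have hmem : x - (Submodule.orthogonalProjection (ℝ ∙ v)ᗮ x : Euc n) ∈ (ℝ ∙ v) := by
      have := Submodule.sub_starProjection_mem_orthogonal (K := (ℝ ∙ v)ᗮ) x
      rwa [Submodule.orthogonal_orthogonal] at this
    obtain ⟨c, hc⟩ := Submodule.mem_span_singleton.mp hmem
    have hzero : Submodule.orthogonalProjection (ℝ ∙ u)ᗮ
        (ψ (x - (Submodule.orthogonalProjection (ℝ ∙ v)ᗮ x : Euc n))) = 0 := by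
      apply Submodule.orthogonalProjectionOnto_apply_of_mem_orthogonal
      rw [Submodule.orthogonal_orthogonal]
      rw [← hc]
      have : ψ (c • v) = (c * ‖v0‖⁻¹) • u := by
        rw [map_smul]
        show c • ((ψ : Euc n →ₗ[ℝ] Euc n) v) = _
        rw [hψv, smul_smul]
      rw [this]
      exact Submodule.smul_mem _ _ (Submodule.mem_span_singleton_self u)
    have : Submodule.orthogonalProjection (ℝ ∙ u)ᗮ (ψ x) =
        Submodule.orthogonalProjection (ℝ ∙ u)ᗮ (ψ ((Submodule.orthogonalProjection (ℝ ∙ v)ᗮ x : Euc n))) := by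
      have hsub := map_sub (Submodule.orthogonalProjection (ℝ ∙ u)ᗮ) (ψ x)
        (ψ ((Submodule.orthogonalProjection (ℝ ∙ v)ᗮ x : Euc n)))
      rw [← map_sub ψ] at hsub
      rw [hzero] at hsub
      exact sub_eq_zero.mp hsub.symm
    simp only [hg, hP, LinearMap.comp_apply, Submodule.subtype_apply,
      ContinuousLinearMap.coe_coe, LinearEquiv.coe_coe]
    exact congrArg Subtype.val this
  obtain ⟨w, hw⟩ := h v hv
  refine ⟨g w, ?_⟩
  rw [key K, key L]
  have htr : transl (g '' (projSet (ℝ ∙ v)ᗮ K)) (g w)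
      = g '' (transl (projSet (ℝ ∙ v)ᗮ K) w) := by
    unfold transl
    rw [Set.image_image, Set.image_image]
    apply Set.image_congr'
    intro x
    rw [← map_add]
  rw [htr]
  exact Set.image_mono hw

/-- Shadow covering in every direction is invariant under nonsingular linear maps: L_u
contains a translate of K_u for all unit u iff (ψL)_u contains a translate of (ψK)_u for
all unit u. -/
theorem shadow_covering_linear_invariant {n : ℕ} (K L : Set (Euc n))
    (hKc : IsCompact K) (hKv : Convex ℝ K) (hKne : K.Nonempty)
    (hLc : IsCompact L) (hLv : Convex ℝ L) (hLne : L.Nonempty)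
    (ψ : Euc n ≃ₗ[ℝ] Euc n) :
    (∀ u : Euc n, ‖u‖ = 1 →
        ∃ w, transl (projSet (ℝ ∙ u)ᗮ K) w ⊆ projSet (ℝ ∙ u)ᗮ L) ↔
      (∀ u : Euc n, ‖u‖ = 1 →
        ∃ w, transl (projSet (ℝ ∙ u)ᗮ (⇑ψ '' K)) w ⊆ projSet (ℝ ∙ u)ᗮ (⇑ψ '' L)) := by
  constructor
  · exact shadow_aux K L ψ
  · intro h
    have h2 := shadow_aux (⇑ψ '' K) (⇑ψ '' L) ψ.symm h
    have hK : ⇑ψ.symm '' (⇑ψ '' K) = K := by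
      rw [Set.image_image]; simp
    have hL : ⇑ψ.symm '' (⇑ψ '' L) = L := by
      rw [Set.image_image]; simp
    rwa [hK, hL] at h2
end
end

section
/- Let L be a compact convex set in ℝⁿ and let 1 ≤ d ≤ n−1. Suppose L has regular boundary points x₀, …, x_{d+1} whose corresponding outer unit normals u₀, …, u_{d+1} form a simplicial family. Then there exists a polytope S (the convex hull of x₀, …, x_{d+1}) and a real number α > 1 such that for every d-dimensional subspace ξ of ℝⁿ the projection L_ξ contains a translate of (αS)_ξ, while L does not contain any translate of αS. In particular, L is not d-reliable. -/
open scoped Pointwise RealInnerProductSpace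
noncomputable section

/-! ### Auxiliary lemmas -/

lemma enter_lemma {n : ℕ} {M : Set (Euc n)} (hMc : Convex ℝ M) (hMcl : IsClosed M)
    {x : Euc n} (hx : x ∈ M) (z : Euc n)
    (h : ∀ ν : Euc n, ‖ν‖ = 1 → (∀ y ∈ M, ⟪y - x, ν⟫ ≤ 0) → ⟪z, ν⟫ < 0) :
    ∃ t : ℝ, 0 < t ∧ x + t • z ∈ M := by
  by_contra hcon
  push_neg at hcon
  have hsep : ∀ k : ℕ, ∃ ν : Euc n, ‖ν‖ = 1 ∧
      (∀ y ∈ M, ⟪y - x, ν⟫ ≤ (1 / (k+1) : ℝ) * ⟪z, ν⟫) ∧ 0 < ⟪z, ν⟫ := by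
    intro k
    have htk : (0:ℝ) < 1 / (k+1) := by positivity
    have hnot : x + (1 / (k+1) : ℝ) • z ∉ M := hcon _ htk
    obtain ⟨f, s, hfs, hsf⟩ := geometric_hahn_banach_closed_point hMc hMcl hnot
    set g := (InnerProductSpace.toDual ℝ (Euc n)).symm f with hg
    have hgf : ∀ y : Euc n, ⟪y, g⟫ = f y := fun y =>
      (real_inner_comm g y).trans (InnerProductSpace.toDual_symm_apply)
    have h2 : s < f x + (1/(k+1):ℝ) * f z := by
      have := hsf; rwa [map_add, map_smul, smul_eq_mul] at this
    have hfz : 0 < f z := by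
      have h1 : f x < s := hfs x hx; nlinarith
    have hgne : g ≠ 0 := by
      intro h0
      have h4 : f z = 0 := by rw [← hgf, h0, inner_zero_right]
      rw [h4] at hfz; exact lt_irrefl 0 hfz
    have hgpos : (0:ℝ) < ‖g‖⁻¹ := inv_pos.mpr (norm_pos_iff.mpr hgne)
    refine ⟨‖g‖⁻¹ • g, ?_, ?_, ?_⟩
    · simp [norm_smul, inv_mul_cancel₀ (norm_ne_zero_iff.mpr hgne)]
    · intro y hy
      have h1 : f y < s := hfs y hy
      have h3 : ⟪y - x, g⟫ < (1/(k+1):ℝ) * ⟪z, g⟫ := by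
        rw [hgf z, inner_sub_left, hgf y, hgf x]; linarith
      rw [real_inner_smul_right, real_inner_smul_right]
      calc ‖g‖⁻¹ * ⟪y - x, g⟫ ≤ ‖g‖⁻¹ * ((1/(k+1):ℝ) * ⟪z, g⟫) :=
            mul_le_mul_of_nonneg_left h3.le hgpos.le
        _ = (1/(k+1):ℝ) * (‖g‖⁻¹ * ⟪z, g⟫) := by ring
    · rw [real_inner_smul_right, hgf z]
      exact mul_pos hgpos hfz
  choose ν hν1 hν2 hν3 using hsep
  obtain ⟨a, ha, φ, hφ, hlim⟩ := (isCompact_sphere (0 : Euc n) 1).tendsto_subseq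
    (x := ν) (fun k => by simp [Metric.mem_sphere, dist_eq_norm, hν1 k])
  have hanorm : ‖a‖ = 1 := by simpa [Metric.mem_sphere, dist_eq_norm] using ha
  have hnormal : ∀ y ∈ M, ⟪y - x, a⟫ ≤ 0 := by
    intro y hy
    have hc1 : Filter.Tendsto (fun k => ⟪y - x, ν (φ k)⟫) Filter.atTop (nhds ⟪y - x, a⟫) :=
      Filter.Tendsto.inner tendsto_const_nhds hlim
    have hc2 : Filter.Tendsto (fun k => (1 / ((φ k : ℝ)+1) : ℝ) * ⟪z, ν (φ k)⟫)
        Filter.atTop (nhds (0 * ⟪z, a⟫)) :=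
      Filter.Tendsto.mul
        (tendsto_one_div_add_atTop_nhds_zero_nat.comp hφ.tendsto_atTop)
        (Filter.Tendsto.inner tendsto_const_nhds hlim)
    have := le_of_tendsto_of_tendsto' hc1 hc2 (fun k => hν2 (φ k) y hy)
    simpa using this
  have h1 := h a hanorm hnormal
  have h2 : 0 ≤ ⟪z, a⟫ :=
    le_of_tendsto_of_tendsto' tendsto_const_nhds
      (Filter.Tendsto.inner tendsto_const_nhds hlim) (fun k => (hν3 (φ k)).le)
  linarith

lemma ker_unique {n m : ℕ} (u : Fin (m+1) → Euc n)
    (hrank : Module.finrank ℝ (Submodule.span ℝ (Set.range u)) = m)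
    (c : Fin (m+1) → ℝ) (hc : ∀ i, 0 < c i) (hcs : ∑ i, c i • u i = 0)
    (μ : Fin (m+1) → ℝ) (hμ : ∑ i, μ i • u i = 0) (j : Fin (m+1)) (hμj : μ j = 0) :
    μ = 0 := by
  set φ := Fintype.linearCombination ℝ u with hφ
  have hφap : ∀ g : Fin (m+1) → ℝ, φ g = ∑ i, g i • u i := fun g =>
    Fintype.linearCombination_apply ℝ u g
  have hrange : LinearMap.range φ = Submodule.span ℝ (Set.range u) :=
    Fintype.range_linearCombination ℝ u
  have hrn := LinearMap.finrank_range_add_finrank_ker φ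
  rw [hrange, hrank, Module.finrank_pi, Fintype.card_fin] at hrn
  have hker : Module.finrank ℝ (LinearMap.ker φ) = 1 := by omega
  have hcne : c ≠ 0 := by
    intro h0; have := hc 0; rw [h0] at this; simp at this
  have hcker : c ∈ LinearMap.ker φ := by
    rw [LinearMap.mem_ker, hφap]; exact hcs
  have hle : (ℝ ∙ c) ≤ LinearMap.ker φ := by
    rw [Submodule.span_singleton_le_iff_mem]; exact hcker
  have hspan : (ℝ ∙ c) = LinearMap.ker φ := by
    apply Submodule.eq_of_le_of_finrank_eq hle
    rw [hker, finrank_span_singleton hcne]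
  have hμker : μ ∈ LinearMap.ker φ := by
    rw [LinearMap.mem_ker, hφap]; exact hμ
  rw [← hspan, Submodule.mem_span_singleton] at hμker
  obtain ⟨t, rfl⟩ := hμker
  have : t * c j = 0 := hμj
  have ht : t = 0 := by
    rcases mul_eq_zero.mp this with h | h
    · exact h
    · exact absurd h (ne_of_gt (hc j))
  rw [ht, zero_smul]

lemma q_exists {n m : ℕ} (w : Fin m → Euc n) (hw : LinearIndependent ℝ w)
    (t : Fin m → ℝ) : ∃ q : Euc n, ∀ k, ⟪q, w k⟫ = t k := by
  set W := Submodule.span ℝ (Set.range w) with hW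
  set B : Module.Basis (Fin m) ℝ W := Module.Basis.span hw with hB
  set f : W →ₗ[ℝ] ℝ := ∑ k, t k • B.coord k with hf
  set f' : W →L[ℝ] ℝ := LinearMap.toContinuousLinearMap f with hf'
  set q' : W := (InnerProductSpace.toDual ℝ W).symm f' with hq'
  refine ⟨(q' : Euc n), fun k => ?_⟩
  have hwk : w k = ((B k : W) : Euc n) := by rw [hB, Module.Basis.span_apply]
  have h1 : ⟪(q' : Euc n), w k⟫ = ⟪q', B k⟫ := by
    rw [hwk, Submodule.coe_inner]
  rw [h1]
  have h2 : ⟪q', B k⟫ = f' (B k) := InnerProductSpace.toDual_symm_apply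
  rw [h2]
  have h3 : f' (B k) = f (B k) := rfl
  rw [h3, hf]
  rw [LinearMap.sum_apply]
  have h4 : ∀ l, (t l • B.coord l) (B k) = t l * (if l = k then 1 else 0) := by
    intro l
    rw [LinearMap.smul_apply, Module.Basis.coord_apply, Module.Basis.repr_self, smul_eq_mul]
    congr 1
    simp [Finsupp.single_apply, eq_comm]
  simp only [h4]
  simp

def Mset {n : ℕ} (L : Set (Euc n)) (v : Euc n) : Set (Euc n) :=
  {y | ∃ l ∈ L, ∃ t : ℝ, |t| ≤ 1 ∧ y = l + t • v}

lemma subset_Mset {n : ℕ} (L : Set (Euc n)) (v : Euc n) : L ⊆ Mset L v := by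
  intro l hl
  exact ⟨l, hl, 0, by simp⟩

lemma Mset_convex {n : ℕ} {L : Set (Euc n)} (hLv : Convex ℝ L) (v : Euc n) :
    Convex ℝ (Mset L v) := by
  rintro y1 ⟨l1, hl1, t1, ht1, rfl⟩ y2 ⟨l2, hl2, t2, ht2, rfl⟩ a b ha hb hab
  refine ⟨a • l1 + b • l2, hLv hl1 hl2 ha hb hab, a * t1 + b * t2, ?_, ?_⟩
  · calc |a * t1 + b * t2| ≤ |a * t1| + |b * t2| := abs_add_le _ _
      _ = a * |t1| + b * |t2| := by rw [abs_mul, abs_mul, abs_of_nonneg ha, abs_of_nonneg hb]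
      _ ≤ a * 1 + b * 1 := by
          apply add_le_add (mul_le_mul_of_nonneg_left ht1 ha) (mul_le_mul_of_nonneg_left ht2 hb)
      _ = 1 := by rw [mul_one, mul_one, hab]
  · module

lemma Mset_compact {n : ℕ} {L : Set (Euc n)} (hLc : IsCompact L) (v : Euc n) :
    IsCompact (Mset L v) := by
  have : Mset L v = (fun p : Euc n × ℝ => p.1 + p.2 • v) '' (L ×ˢ Set.Icc (-1) 1) := by
    ext y
    constructor
    · rintro ⟨l, hl, t, ht, rfl⟩
      exact ⟨(l, t), ⟨hl, abs_le.mp ht⟩, rfl⟩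
    · rintro ⟨⟨l, t⟩, ⟨hl, ht⟩, rfl⟩
      exact ⟨l, hl, t, abs_le.mpr ht, rfl⟩
  rw [this]
  exact (hLc.prod isCompact_Icc).image
    (continuous_fst.add (continuous_snd.smul continuous_const))

/-- L is full-dimensional: it contains a ball. -/
lemma fulldim {n d : ℕ} {L : Set (Euc n)} (hLc : IsCompact L) (hLv : Convex ℝ L)
    (x u : Fin (d + 1 + 1) → Euc n)
    (hreg : ∀ i, x i ∈ frontier L ∧ ‖u i‖ = 1 ∧ (∀ y ∈ L, ⟪y - x i, u i⟫ ≤ 0) ∧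
      ∀ w : Euc n, ‖w‖ = 1 → (∀ y ∈ L, ⟪y - x i, w⟫ ≤ 0) → w = u i) :
    ∃ p : Euc n, ∃ r : ℝ, 0 < r ∧ Metric.ball p r ⊆ L := by
  have hx0L : x 0 ∈ L := by
    have := (hreg 0).1
    rw [frontier, hLc.isClosed.closure_eq] at this
    exact this.1
  have hint : (interior L).Nonempty := by
    rw [hLv.interior_nonempty_iff_affineSpan_eq_top]
    by_contra htop
    -- direction is not ⊤
    have hdir : (affineSpan ℝ L).direction ≠ ⊤ := by
      intro h
      exact htop ((AffineSubspace.direction_eq_top_iff_of_nonempty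
        ((affineSpan_nonempty (k := ℝ) (V := Euc n)).mpr ⟨_, hx0L⟩)).mp h)
    have horth : ((affineSpan ℝ L).direction)ᗮ ≠ ⊥ := by
      intro h
      exact hdir (Submodule.orthogonal_eq_bot_iff.mp h)
    obtain ⟨e0, he0mem, he0ne⟩ := Submodule.exists_mem_ne_zero_of_ne_bot horth
    set e := ‖e0‖⁻¹ • e0 with he
    have hene : ‖e0‖ ≠ 0 := norm_ne_zero_iff.mpr he0ne
    have heu : ‖e‖ = 1 := by
      rw [he, norm_smul]; simp [inv_mul_cancel₀ hene]
    have hemem : e ∈ ((affineSpan ℝ L).direction)ᗮ := Submodule.smul_mem _ _ he0mem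
    have hkey : ∀ y ∈ L, ⟪y - x 0, e⟫ = 0 := by
      intro y hy
      have hmem : y - x 0 ∈ (affineSpan ℝ L).direction := by
        have := AffineSubspace.vsub_mem_direction
          (subset_affineSpan ℝ L hy) (subset_affineSpan ℝ L hx0L)
        simpa using this
      exact (Submodule.mem_orthogonal _ e).mp hemem _ hmem
    have h1 : e = u 0 := (hreg 0).2.2.2 e heu (fun y hy => le_of_eq (hkey y hy))
    have h2 : -e = u 0 := by
      apply (hreg 0).2.2.2 (-e) (by simpa using heu)
      intro y hy
      rw [inner_neg_right, hkey y hy, neg_zero]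
    have heq : e = -e := h1.trans h2.symm
    have he0 : e = 0 := by
      have h3 : (2:ℝ) • e = 0 := by
        rw [two_smul]
        nth_rewrite 1 [heq]
        simp
      simpa using (smul_eq_zero.mp h3).resolve_left (by norm_num)
    rw [he0] at heu; simp at heu
  obtain ⟨p, hp⟩ := hint
  rw [mem_interior_iff_mem_nhds, Metric.mem_nhds_iff] at hp
  obtain ⟨r, hr, hball⟩ := hp
  exact ⟨p, r, hr, hball⟩

/-- positivity of Σ c i ⟪x i, u i⟫ -/
lemma Tpos {n d : ℕ} {L : Set (Euc n)} (hLc : IsCompact L)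
    (x u : Fin (d + 1 + 1) → Euc n)
    (hreg : ∀ i, x i ∈ frontier L ∧ ‖u i‖ = 1 ∧ (∀ y ∈ L, ⟪y - x i, u i⟫ ≤ 0) ∧
      ∀ w : Euc n, ‖w‖ = 1 → (∀ y ∈ L, ⟪y - x i, w⟫ ≤ 0) → w = u i)
    (hinj : Function.Injective u)
    (c : Fin (d + 1 + 1) → ℝ) (hc : ∀ i, 0 < c i) (hcs : ∑ i, c i • u i = 0) :
    0 < ∑ i, c i * ⟪x i, u i⟫ := by
  have hxL : ∀ i, x i ∈ L := by
    intro i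
    have := (hreg i).1
    rw [frontier, hLc.isClosed.closure_eq] at this
    exact this.1
  by_contra hT
  push_neg at hT
  have hkey : ∀ y ∈ L, ∀ i, ⟪y, u i⟫ = ⟪x i, u i⟫ := by
    intro y hy
    have hsum0 : ∑ i, c i * ⟪y, u i⟫ = 0 := by
      have : ∑ i, c i * ⟪y, u i⟫ = ⟪y, ∑ i, c i • u i⟫ := by
        rw [inner_sum]
        congr 1; ext i; rw [real_inner_smul_right]
      rw [this, hcs, inner_zero_right]
    have hterms : ∀ i : Fin (d+1+1), (0:ℝ) ≤ c i * (⟪x i, u i⟫ - ⟪y, u i⟫) := by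
      intro i
      apply mul_nonneg (hc i).le
      have := (hreg i).2.2.1 y hy
      rw [inner_sub_left] at this
      linarith
    have hsumle : ∑ i, c i * (⟪x i, u i⟫ - ⟪y, u i⟫) ≤ 0 := by
      have : ∑ i, c i * (⟪x i, u i⟫ - ⟪y, u i⟫)
          = ∑ i, c i * ⟪x i, u i⟫ - ∑ i, c i * ⟪y, u i⟫ := by
        rw [← Finset.sum_sub_distrib]; congr 1; ext i; ring
      rw [this, hsum0, sub_zero]; exact hT
    have hzero : ∀ i ∈ Finset.univ, c i * (⟪x i, u i⟫ - ⟪y, u i⟫) = 0 := by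
      rw [← Finset.sum_eq_zero_iff_of_nonneg (fun i _ => hterms i)]
      exact le_antisymm hsumle (Finset.sum_nonneg (fun i _ => hterms i))
    intro i
    have := hzero i (Finset.mem_univ i)
    rcases mul_eq_zero.mp this with h | h
    · exact absurd h (ne_of_gt (hc i))
    · linarith [h]
  -- now u 1 is a normal at x 0
  have hnorm : ∀ y ∈ L, ⟪y - x 0, u 1⟫ ≤ 0 := by
    intro y hy
    rw [inner_sub_left, hkey y hy 1, hkey (x 0) (hxL 0) 1]
    simp
  have h1 : u 1 = u 0 := (hreg 0).2.2.2 (u 1) ((hreg 1).2.1) hnorm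
  have h01 : (0 : Fin (d+1+1)) ≠ 1 := by
    intro h
    have := congrArg Fin.val h
    simp [Fin.val_one] at this
  exact h01 (hinj h1.symm)

lemma pointwise {n d : ℕ} {L : Set (Euc n)} (hLc : IsCompact L) (hLv : Convex ℝ L)
    (x u : Fin (d + 1 + 1) → Euc n)
    (hreg : ∀ i, x i ∈ frontier L ∧ ‖u i‖ = 1 ∧ (∀ y ∈ L, ⟪y - x i, u i⟫ ≤ 0) ∧
      ∀ w : Euc n, ‖w‖ = 1 → (∀ y ∈ L, ⟪y - x i, w⟫ ≤ 0) → w = u i)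
    (hrank : Module.finrank ℝ (Submodule.span ℝ (Set.range u)) = d + 1)
    (c : Fin (d + 1 + 1) → ℝ) (hc : ∀ i, 0 < c i) (hcs : ∑ i, c i • u i = 0)
    (v : Euc n) (hv1 : ‖v‖ = 1) (hvU : v ∈ Submodule.span ℝ (Set.range u)) :
    ∃ α : ℝ, 1 < α ∧ ∃ w : Euc n,
      ∀ s ∈ convexHull ℝ (Set.range x), α • s + w ∈ Mset L v := by
  have hxL : ∀ i, x i ∈ L := by
    intro i
    have := (hreg i).1
    rw [frontier, hLc.isClosed.closure_eq] at this
    exact this.1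
  -- find j with ⟪v, u j⟫ ≠ 0
  have hj : ∃ j, ⟪v, u j⟫ ≠ 0 := by
    by_contra hall
    push_neg at hall
    have hvorth : v ∈ (Submodule.span ℝ (Set.range u))ᗮ := by
      rw [Submodule.mem_orthogonal]
      intro w hw
      induction hw using Submodule.span_induction with
      | mem w hw =>
          obtain ⟨i, rfl⟩ := hw
          rw [real_inner_comm]; exact hall i
      | zero => simp
      | add w₁ w₂ _ _ h1 h2 => rw [inner_add_left, h1, h2, add_zero]
      | smul a w _ h1 => rw [real_inner_smul_left, h1, mul_zero]
    have hv0 : v ∈ (⊥ : Submodule ℝ (Euc n)) := by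
      rw [← (Submodule.orthogonal_disjoint (Submodule.span ℝ (Set.range u))).eq_bot]
      exact ⟨hvU, hvorth⟩
    rw [Submodule.mem_bot] at hv0
    rw [hv0] at hv1
    simp at hv1
  obtain ⟨j, hj⟩ := hj
  -- the u i for i ≠ j are linearly independent
  have hindep : LinearIndependent ℝ (u ∘ j.succAbove) := by
    rw [Fintype.linearIndependent_iff]
    intro g hg k
    set μ : Fin (d + 1 + 1) → ℝ := Function.extend j.succAbove g 0 with hμdef
    have hμap : ∀ k, μ (j.succAbove k) = g k := fun k =>
      Function.Injective.extend_apply (Fin.succAbove_right_injective) _ _ _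
    have hμj : μ j = 0 := by
      rw [hμdef, Function.extend_apply']
      · rfl
      · rintro ⟨a, ha⟩
        exact Fin.succAbove_ne j a ha
    have hμsum : ∑ i, μ i • u i = 0 := by
      rw [Fin.sum_univ_succAbove (fun i => μ i • u i) j, hμj, zero_smul, zero_add]
      have : ∀ k, μ (j.succAbove k) • u (j.succAbove k) = g k • (u ∘ j.succAbove) k := by
        intro k; rw [hμap]; rfl
      rw [Finset.sum_congr rfl (fun k _ => this k)]
      exact hg
    have := ker_unique u hrank c hc hcs μ hμsum j hμj
    rw [← hμap k, this]
    rfl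
  -- choose q with ⟪q, u i⟫ = ⟪x i, u i⟫ + 1 for i ≠ j
  obtain ⟨q, hq⟩ := q_exists (u ∘ j.succAbove) hindep
    (fun k => ⟪x (j.succAbove k), u (j.succAbove k)⟫ + 1)
  have hq' : ∀ i, i ≠ j → ⟪q, u i⟫ = ⟪x i, u i⟫ + 1 := by
    intro i hi
    obtain ⟨k, rfl⟩ := Fin.exists_succAbove_eq hi
    exact hq k
  -- setup M
  set M := Mset L v with hM
  have hMconv : Convex ℝ M := Mset_convex hLv v
  have hMcl : IsClosed M := (Mset_compact hLc v).isClosed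
  have hLM : L ⊆ M := subset_Mset L v
  -- for each i, we can enter M from x i in direction x i - q
  have hent : ∀ i, ∃ t : ℝ, 0 < t ∧ x i + t • (x i - q) ∈ M := by
    intro i
    apply enter_lemma hMconv hMcl (hLM (hxL i))
    intro ν hν1 hν2
    have hνL : ∀ y ∈ L, ⟪y - x i, ν⟫ ≤ 0 := fun y hy => hν2 y (hLM hy)
    have hνu : ν = u i := (hreg i).2.2.2 ν hν1 hνL
    have hpv : ⟪v, ν⟫ ≤ 0 := by
      have hmem : x i + v ∈ M := ⟨x i, hxL i, 1, by norm_num, by rw [one_smul]⟩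
      have := hν2 _ hmem
      rwa [add_sub_cancel_left] at this
    have hmv : ⟪v, ν⟫ ≥ 0 := by
      have hmem : x i + (-1 : ℝ) • v ∈ M := ⟨x i, hxL i, -1, by norm_num, rfl⟩
      have := hν2 _ hmem
      rw [add_sub_cancel_left] at this
      rw [real_inner_smul_left] at this
      linarith
    have hvν : ⟪v, u i⟫ = 0 := by rw [← hνu]; linarith
    have hij : i ≠ j := by
      intro h; rw [h] at hvν; exact hj hvν
    rw [hνu, inner_sub_left, hq' i hij]
    linarith
  choose t ht0 htM using hent
  set T : ℝ := Finset.univ.inf' Finset.univ_nonempty t with hTdef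
  have hT0 : 0 < T := by
    rw [hTdef, Finset.lt_inf'_iff]
    exact fun i _ => ht0 i
  have hTle : ∀ i, T ≤ t i := fun i => Finset.inf'_le t (Finset.mem_univ i)
  -- x i + T • (x i - q) ∈ M for all i
  have hxiM : ∀ i, x i + T • (x i - q) ∈ M := by
    intro i
    have hti : 0 < t i := ht0 i
    have hb0 : 0 ≤ T / t i := le_of_lt (div_pos hT0 hti)
    have hb1 : T / t i ≤ 1 := (div_le_one hti).mpr (hTle i)
    have ha0 : 0 ≤ 1 - T / t i := by linarith
    have hab : (1 - T / t i) + T / t i = 1 := by ring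
    have := hMconv (hLM (hxL i)) (htM i) ha0 hb0 hab
    have heq : (1 - T / t i) • x i + (T / t i) • (x i + t i • (x i - q))
        = x i + T • (x i - q) := by
      have hb : (T / t i) • (t i • (x i - q)) = T • (x i - q) := by
        rw [smul_smul, div_mul_cancel₀ _ (ne_of_gt hti)]
      rw [smul_add, hb, ← add_assoc, ← add_smul, hab, one_smul]
    rwa [heq] at this
  -- now define α and w
  refine ⟨1 + T, by linarith, -(T • q), ?_⟩
  have hvert : ∀ i, (1 + T) • x i + -(T • q) ∈ M := by
    intro i
    have heq : (1 + T) • x i + -(T • q) = x i + T • (x i - q) := by module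
    rw [heq]; exact hxiM i
  intro s hs
  have hPconv : Convex ℝ {s : Euc n | (1 + T) • s + -(T • q) ∈ M} := by
    intro s1 hs1 s2 hs2 a b ha hb hab
    have heq : (1 + T) • (a • s1 + b • s2) + -(T • q)
        = a • ((1 + T) • s1 + -(T • q)) + b • ((1 + T) • s2 + -(T • q)) := by
      have h2 : a • ((1 + T) • s1 + -(T • q)) + b • ((1 + T) • s2 + -(T • q))
          = (1 + T) • (a • s1 + b • s2) + -((a + b) • (T • q)) := by module
      rw [h2, hab, one_smul]
    rw [Set.mem_setOf_eq, heq]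
    exact hMconv hs1 hs2 ha hb hab
  have hsub : Set.range x ⊆ {s : Euc n | (1 + T) • s + -(T • q) ∈ M} := by
    rintro _ ⟨i, rfl⟩
    exact hvert i
  exact convexHull_min hsub hPconv hs

/-- stability of the fitting property under perturbation of v. -/
lemma stability {n : ℕ} {L : Set (Euc n)} (hLv : Convex ℝ L) (S : Set (Euc n))
    (p : Euc n) (r : ℝ) (hr : 0 < r) (hball : Metric.ball p r ⊆ L)
    (v : Euc n) (α : ℝ) (hα : 1 < α) (w : Euc n)
    (hsub : ∀ s ∈ S, α • s + w ∈ Mset L v) :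
    ∃ δ : ℝ, 0 < δ ∧ ∀ v' : Euc n, ‖v' - v‖ < δ →
      ∃ w', ∀ s ∈ S, ((α + 1)/2) • s + w' ∈ Mset L v' := by
  set lam : ℝ := (α - 1)/(2*α) with hlam
  have hα0 : 0 < α := by linarith
  have hlam0 : 0 < lam := by
    apply div_pos <;> linarith
  have hlam1 : lam < 1 := by
    rw [hlam, div_lt_one (by linarith)]; linarith
  refine ⟨lam * r, mul_pos hlam0 hr, fun v' hv' => ?_⟩
  refine ⟨(1 - lam) • w + lam • p, fun s hs => ?_⟩
  obtain ⟨l, hl, t, ht, heq⟩ := hsub s hs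
  -- α • s + w = l + t • v
  have hm : l + t • v' ∈ Mset L v' := ⟨l, hl, t, ht, rfl⟩
  set e : Euc n := t • (v - v') with he
  have henorm : ‖e‖ < lam * r := by
    rw [he, norm_smul]
    calc |t| * ‖v - v'‖ ≤ 1 * ‖v - v'‖ :=
          mul_le_mul_of_nonneg_right ht (norm_nonneg _)
      _ = ‖v' - v‖ := by rw [one_mul, norm_sub_rev]
      _ < lam * r := hv'
  have hpball : p + ((1 - lam)/lam) • e ∈ L := by
    apply hball
    rw [Metric.mem_ball, dist_eq_norm, add_sub_cancel_left, norm_smul]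
    have h1 : |(1 - lam)/lam| = (1 - lam)/lam := abs_of_pos (div_pos (by linarith) hlam0)
    rw [Real.norm_eq_abs, h1]
    calc (1 - lam)/lam * ‖e‖ < (1 - lam)/lam * (lam * r) := by
          apply mul_lt_mul_of_pos_left henorm (div_pos (by linarith) hlam0)
      _ = (1 - lam) * r := by field_simp
      _ ≤ 1 * r := by nlinarith
      _ = r := one_mul r
  have hpM : p + ((1 - lam)/lam) • e ∈ Mset L v' := subset_Mset L v' hpball
  have hcomb := (Mset_convex hLv v') hm hpM (by linarith : (0:ℝ) ≤ 1 - lam)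
    hlam0.le (by ring)
  have hfinal : (1 - lam) • (l + t • v') + lam • (p + ((1 - lam)/lam) • e)
      = ((α + 1)/2) • s + ((1 - lam) • w + lam • p) := by
    have hls : lam • (((1 - lam)/lam) • e) = (1 - lam) • e := by
      rw [smul_smul, mul_div_cancel₀ _ (ne_of_gt hlam0)]
    have h2 : l + t • v' = (α • s + w) - e := by
      rw [he, heq]; module
    have h3 : (1 - lam) * α = (α + 1)/2 := by
      rw [hlam]; field_simp; ring
    rw [smul_add lam, hls, h2, ← h3]
    module
  rwa [hfinal] at hcomb

/-- monotonicity in α. -/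
lemma mono_alpha {n : ℕ} {L : Set (Euc n)} (hLv : Convex ℝ L) (S : Set (Euc n))
    (hSL : S ⊆ L) (v : Euc n) (α β : ℝ) (hα : 1 < α) (hβ : 1 ≤ β) (hβα : β ≤ α)
    (w : Euc n) (hsub : ∀ s ∈ S, α • s + w ∈ Mset L v) :
    ∃ w', ∀ s ∈ S, β • s + w' ∈ Mset L v := by
  set θ : ℝ := (β - 1)/(α - 1) with hθ
  have hθ0 : 0 ≤ θ := div_nonneg (by linarith) (by linarith)
  have hθ1 : θ ≤ 1 := by
    rw [hθ, div_le_one (by linarith)]; linarith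
  refine ⟨θ • w, fun s hs => ?_⟩
  have h1 : θ • (α • s + w) + (1 - θ) • s = β • s + θ • w := by
    have hαne : α - 1 ≠ 0 := ne_of_gt (by linarith)
    have hβeq : θ * α + (1 - θ) = β := by
      rw [hθ]; field_simp; ring
    calc θ • (α • s + w) + (1 - θ) • s = (θ * α + (1 - θ)) • s + θ • w := by module
      _ = β • s + θ • w := by rw [hβeq]
  have h2 := (Mset_convex hLv v) (hsub s hs) (subset_Mset L v (hSL hs))
    hθ0 (by linarith : (0:ℝ) ≤ 1 - θ) (by ring)
  rwa [h1] at h2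

lemma uniform_alpha {n d : ℕ} {L : Set (Euc n)} (hLc : IsCompact L) (hLv : Convex ℝ L)
    (x u : Fin (d + 1 + 1) → Euc n)
    (hreg : ∀ i, x i ∈ frontier L ∧ ‖u i‖ = 1 ∧ (∀ y ∈ L, ⟪y - x i, u i⟫ ≤ 0) ∧
      ∀ w : Euc n, ‖w‖ = 1 → (∀ y ∈ L, ⟪y - x i, w⟫ ≤ 0) → w = u i)
    (hunit : ∀ i, ‖u i‖ = 1)
    (hrank : Module.finrank ℝ (Submodule.span ℝ (Set.range u)) = d + 1)
    (c : Fin (d + 1 + 1) → ℝ) (hc : ∀ i, 0 < c i) (hcs : ∑ i, c i • u i = 0) :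
    ∃ α : ℝ, 1 < α ∧ ∀ v : Euc n, ‖v‖ = 1 → v ∈ Submodule.span ℝ (Set.range u) →
      ∃ w : Euc n, ∀ s ∈ convexHull ℝ (Set.range x), α • s + w ∈ Mset L v := by
  have hxL : ∀ i, x i ∈ L := by
    intro i
    have := (hreg i).1
    rw [frontier, hLc.isClosed.closure_eq] at this
    exact this.1
  set S : Set (Euc n) := convexHull ℝ (Set.range x) with hS
  have hSL : S ⊆ L := convexHull_min (by rintro _ ⟨i, rfl⟩; exact hxL i) hLv
  obtain ⟨p, r, hr, hball⟩ := fulldim hLc hLv x u hreg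
  set U := Submodule.span ℝ (Set.range u) with hU
  set sphU : Set (Euc n) := Metric.sphere (0 : Euc n) 1 ∩ (U : Set (Euc n)) with hsphU
  have hsphUc : IsCompact sphU :=
    (isCompact_sphere (0 : Euc n) 1).inter_right U.closed_of_finiteDimensional
  have hmem_iff : ∀ v : Euc n, v ∈ sphU ↔ (‖v‖ = 1 ∧ v ∈ U) := by
    intro v
    simp [hsphU, Metric.mem_sphere, dist_eq_norm]
  have key : ∀ v ∈ sphU, ∃ a : ℝ, 1 < a ∧ ∃ δ : ℝ, 0 < δ ∧ ∀ v' : Euc n, ‖v' - v‖ < δ →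
      ∃ w', ∀ s ∈ S, a • s + w' ∈ Mset L v' := by
    intro v hv
    rw [hmem_iff] at hv
    obtain ⟨α, hα, w, hw⟩ := pointwise hLc hLv x u hreg hrank c hc hcs v hv.1 hv.2
    obtain ⟨δ, hδ, hst⟩ := stability hLv S p r hr hball v α hα w hw
    exact ⟨(α + 1)/2, by linarith, δ, hδ, hst⟩
  choose! a ha δ hδ hprop using key
  obtain ⟨t, htsph, hcover⟩ := hsphUc.elim_nhds_subcover (fun v => Metric.ball v (δ v))
    (fun v hv => Metric.ball_mem_nhds v (hδ v hv))
  have hu0 : u 0 ∈ sphU := by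
    rw [hmem_iff]
    exact ⟨hunit 0, Submodule.subset_span ⟨0, rfl⟩⟩
  have htne : t.Nonempty := by
    by_contra hte
    rw [Finset.not_nonempty_iff_eq_empty] at hte
    have := hcover hu0
    rw [hte] at this
    simp at this
  set α : ℝ := t.inf' htne a with hαdef
  have hα1 : 1 < α := by
    rw [hαdef, Finset.lt_inf'_iff]
    exact fun v hv => ha v (htsph v hv)
  refine ⟨α, hα1, fun v hv1 hvU => ?_⟩
  have hvsph : v ∈ sphU := (hmem_iff v).mpr ⟨hv1, hvU⟩
  have := hcover hvsph
  rw [Set.mem_iUnion₂] at this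
  obtain ⟨v₀, hv₀t, hvball⟩ := this
  rw [Metric.mem_ball, dist_eq_norm] at hvball
  obtain ⟨w', hw'⟩ := hprop v₀ (htsph v₀ hv₀t) v hvball
  exact mono_alpha hLv S hSL v (a v₀) α (ha v₀ (htsph v₀ hv₀t)) hα1.le
    (Finset.inf'_le a hv₀t) w' hw'

/-- If L has regular boundary points x₀, …, x_{d+1} whose outer unit normals form a
simplicial family, then for the polytope S = conv{x₀, …, x_{d+1}} there is α > 1 such that
every d-dimensional shadow of L contains a translate of the corresponding shadow of αS,
while L contains no translate of αS.  In particular, L is not d-reliable. -/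
theorem simplicial_normals_not_reliable {n d : ℕ} (hd1 : 1 ≤ d) (hdn : d ≤ n - 1)
    (L : Set (Euc n)) (hLc : IsCompact L) (hLv : Convex ℝ L) (hLne : L.Nonempty)
    (x u : Fin (d + 1 + 1) → Euc n)
    (hreg : ∀ i, IsNormalAtRegularPoint L (x i) (u i))
    (hsimp : SimplicialFamily (d + 1) u) :
    (∃ α : ℝ, 1 < α ∧
      (∀ ξ : Submodule ℝ (Euc n), Module.finrank ℝ ξ = d →
        ∃ w, transl (projSet ξ (α • convexHull ℝ (Set.range x))) w ⊆ projSet ξ L) ∧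
      ¬ ∃ v, transl (α • convexHull ℝ (Set.range x)) v ⊆ L) ∧
    ¬ DReliable d L := by
  obtain ⟨hinj, hunit, hrank, c, hc, hcs⟩ := hsimp
  have hreg' : ∀ i, x i ∈ frontier L ∧ ‖u i‖ = 1 ∧ (∀ y ∈ L, ⟪y - x i, u i⟫ ≤ 0) ∧
      ∀ w : Euc n, ‖w‖ = 1 → (∀ y ∈ L, ⟪y - x i, w⟫ ≤ 0) → w = u i := fun i => hreg i
  set S : Set (Euc n) := convexHull ℝ (Set.range x) with hSdef
  set U : Submodule ℝ (Euc n) := Submodule.span ℝ (Set.range u) with hUdef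
  obtain ⟨α, hα1, hαfit⟩ := uniform_alpha hLc hLv x u hreg' hunit hrank c hc hcs
  have hT := Tpos hLc x u hreg' hinj c hc hcs
  -- basic dimension facts
  have hn : Module.finrank ℝ (Euc n) = n := finrank_euclideanSpace_fin
  have hdn' : d + 1 ≤ n := by omega
  -- part 1: every d-dimensional shadow fits
  have hshadow : ∀ ξ : Submodule ℝ (Euc n), Module.finrank ℝ ξ = d →
      ∃ w, transl (projSet ξ (α • S)) w ⊆ projSet ξ L := by
    intro ξ hξ
    -- find a unit vector v ∈ U ⊓ ξᗮ
    have h1 : Module.finrank ℝ (ξᗮ) = n - d := by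
      have := Submodule.finrank_add_finrank_orthogonal ξ
      rw [hξ, hn] at this
      omega
    have h2 := Submodule.finrank_sup_add_finrank_inf_eq U (ξᗮ)
    have h3 : Module.finrank ℝ (U ⊔ ξᗮ : Submodule ℝ (Euc n))
        ≤ Module.finrank ℝ (Euc n) := Submodule.finrank_le _
    rw [hn] at h3
    have h4 : 0 < Module.finrank ℝ (U ⊓ ξᗮ : Submodule ℝ (Euc n)) := by
      rw [hrank, h1] at h2; omega
    have h5 : (U ⊓ ξᗮ : Submodule ℝ (Euc n)) ≠ ⊥ := by
      intro hbot
      rw [hbot, finrank_bot] at h4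
      exact lt_irrefl 0 h4
    obtain ⟨v₀, hv₀mem, hv₀ne⟩ := Submodule.exists_mem_ne_zero_of_ne_bot h5
    set v : Euc n := ‖v₀‖⁻¹ • v₀ with hvdef
    have hvne : ‖v₀‖ ≠ 0 := norm_ne_zero_iff.mpr hv₀ne
    have hv1 : ‖v‖ = 1 := by
      rw [hvdef, norm_smul]; simp [inv_mul_cancel₀ hvne]
    have hvmem : v ∈ (U ⊓ ξᗮ : Submodule ℝ (Euc n)) := Submodule.smul_mem _ _ hv₀mem
    have hvU : v ∈ U := hvmem.1
    have hvperp : v ∈ ξᗮ := hvmem.2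
    obtain ⟨w, hw⟩ := hαfit v hv1 hvU
    refine ⟨(ξ.orthogonalProjection w : Euc n), ?_⟩
    rintro z ⟨z₁, ⟨y, hy, rfl⟩, rfl⟩
    obtain ⟨s, hs, rfl⟩ := Set.mem_smul_set.mp hy
    obtain ⟨l, hl, tt, htt, heq⟩ := hw s hs
    have e3 : ξ.orthogonalProjection v = 0 :=
      Submodule.orthogonalProjectionOnto_apply_of_mem_orthogonal hvperp
    have e5 : (ξ.orthogonalProjection (α • s) + ξ.orthogonalProjection w : ξ)
        = ξ.orthogonalProjection l := by
      rw [← map_add, heq, map_add, map_smul, e3, smul_zero, add_zero]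
    have hproj : (ξ.orthogonalProjection (α • s) : Euc n) + (ξ.orthogonalProjection w : Euc n)
        = (ξ.orthogonalProjection l : Euc n) := by
      rw [← Submodule.coe_add, e5]
    exact ⟨l, hl, hproj.symm⟩
  -- part 2: L contains no translate of α • S
  have hnofit : ¬ ∃ v, transl (α • S) v ⊆ L := by
    rintro ⟨v, hv⟩
    have hmem : ∀ i, α • x i + v ∈ L := by
      intro i
      apply hv
      exact ⟨α • x i, Set.smul_mem_smul_set (subset_convexHull ℝ _ ⟨i, rfl⟩), rfl⟩
    have hterm : ∀ i, c i * ⟪α • x i + v - x i, u i⟫ ≤ 0 := fun i =>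
      mul_nonpos_of_nonneg_of_nonpos (hc i).le ((hreg' i).2.2.1 _ (hmem i))
    have hsum : ∑ i, c i * ⟪α • x i + v - x i, u i⟫ ≤ 0 :=
      Finset.sum_nonpos (fun i _ => hterm i)
    have hexp : ∀ i, c i * ⟪α • x i + v - x i, u i⟫
        = (α - 1) * (c i * ⟪x i, u i⟫) + c i * ⟪v, u i⟫ := by
      intro i
      have e1 : α • x i + v - x i = (α - 1) • x i + v := by module
      rw [e1, inner_add_left, real_inner_smul_left]
      ring
    have hvz : ∑ i, c i * ⟪v, u i⟫ = 0 := by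
      have e2 : ∑ i, c i * ⟪v, u i⟫ = ⟪v, ∑ i, c i • u i⟫ := by
        rw [inner_sum]
        congr 1; ext i; rw [real_inner_smul_right]
      rw [e2, hcs, inner_zero_right]
    rw [Finset.sum_congr rfl (fun i _ => hexp i), Finset.sum_add_distrib, hvz,
      add_zero, ← Finset.mul_sum] at hsum
    nlinarith
  refine ⟨⟨α, hα1, hshadow, hnofit⟩, ?_⟩
  -- not d-reliable
  intro hrel
  have hSfin : IsCompact S := Set.Finite.isCompact_convexHull ℝ (Set.finite_range x)
  have hKc : IsCompact (α • S) := by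
    rw [← Set.image_smul]
    exact hSfin.image (continuous_const_smul α)
  have hKv : Convex ℝ (α • S) := (convex_convexHull ℝ _).smul α
  have hKne : (α • S).Nonempty :=
    Set.Nonempty.smul_set ⟨x 0, subset_convexHull ℝ _ ⟨0, rfl⟩⟩
  exact hnofit (hrel (α • S) hKc hKv hKne hshadow)
end
end

section
/- Let L be a smooth convex body in ℝⁿ (a compact convex set with nonempty interior, every boundary point of which is regular). Then there exists an n-dimensional simplex S such that the orthogonal projection L_u contains a translate of S_u for every unit direction u, while L does not contain any translate of S. -/
open scoped Pointwise RealInnerProductSpace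
noncomputable section

namespace SBNR
open Matrix
variable {n : ℕ}

def colv {n : ℕ} (c : ℝ) (y : Euc n) : Fin (n+1) → ℝ := Fin.cons c (fun k => y k)

def Bmat {n : ℕ} (x : Fin (n+1) → Euc n) : Matrix (Fin (n+1)) (Fin (n+1)) ℝ :=
  Matrix.of fun i j => colv 1 (x j) i

variable {n : ℕ}

@[simp] lemma colv_zero (c : ℝ) (y : Euc n) : colv c y 0 = c := rfl
@[simp] lemma colv_succ (c : ℝ) (y : Euc n) (k : Fin n) : colv c y k.succ = y k := rfl

lemma colv_add (c d : ℝ) (y z : Euc n) : colv (c+d) (y+z) = colv c y + colv d z := by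
  funext k; refine Fin.cases ?_ ?_ k <;> simp [colv]

lemma colv_smul (s : ℝ) (y : Euc n) : colv (0:ℝ) (s • y) = s • colv 0 y := by
  funext k; refine Fin.cases ?_ ?_ k <;> simp [colv]

lemma Bmat_update (x : Fin (n+1) → Euc n) (i : Fin (n+1)) (y : Euc n) :
    Bmat (Function.update x i y) = (Bmat x).updateCol i (colv 1 y) := by
  ext r c
  by_cases h : c = i <;> simp [Bmat, Matrix.updateCol_apply, Function.update, h]

/-- the linear part of `y ↦ det (Bmat (update x i y))` -/
def glin (x : Fin (n+1) → Euc n) (i : Fin (n+1)) : Euc n →ₗ[ℝ] ℝ where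
  toFun y := ((Bmat x).updateCol i (colv 0 y)).det
  map_add' y z := by
    show ((Bmat x).updateCol i (colv 0 (y+z))).det = _
    rw [show colv (0:ℝ) (y+z) = colv 0 y + colv 0 z by simpa using colv_add 0 0 y z,
      Matrix.det_updateCol_add]
  map_smul' s y := by
    show ((Bmat x).updateCol i (colv 0 (s • y))).det = _
    rw [colv_smul, Matrix.det_updateCol_smul]; rfl

lemma fdet_eq (x : Fin (n+1) → Euc n) (i : Fin (n+1)) (y z : Euc n) :
    (Bmat (Function.update x i y)).det
      = (Bmat (Function.update x i z)).det + glin x i (y - z) := by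
  rw [Bmat_update, Bmat_update]
  have : colv (1:ℝ) y = colv 1 z + colv 0 (y - z) := by
    rw [← colv_add]; simp
  rw [this, Matrix.det_updateCol_add]; rfl

/-- Scaling behaviour of the determinant under `x ↦ c • x + b`. -/
lemma Bmat_affine (x : Fin (n+1) → Euc n) (c : ℝ) (b : Euc n) :
    (Bmat (fun i => c • x i + b)).det = c^n * (Bmat x).det := by
  classical
  set M : Matrix (Fin (n+1)) (Fin (n+1)) ℝ :=
    Matrix.of fun i j =>
      (Fin.cases (colv 1 0) (fun i' => colv (b i') ((c : ℝ) • (EuclideanSpace.single i' (1:ℝ)))) i : Fin (n+1) → ℝ) j with hM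
  have hmul : Bmat (fun i => c • x i + b) = M * Bmat x := by
    ext i j
    rw [Matrix.mul_apply]
    refine Fin.cases ?_ ?_ i
    · rw [Fin.sum_univ_succ]
      simp [M, Bmat, colv]
    · intro i'
      rw [Fin.sum_univ_succ]
      have : ∀ k : Fin n, M i'.succ k.succ * Bmat x k.succ j
          = if k = i' then c * x j k else 0 := by
        intro k
        by_cases hk : k = i'
        · subst hk; simp [M, Bmat, EuclideanSpace.single_apply]
        · simp [M, Bmat, EuclideanSpace.single_apply, hk, Ne.symm hk]
      rw [Finset.sum_congr rfl (fun k _ => this k), Finset.sum_ite_eq' Finset.univ i' _]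
      simp [M, Bmat, colv, add_comm, PiLp.add_apply, PiLp.smul_apply]
  have hMtri : M.BlockTriangular OrderDual.toDual := by
    intro i j hij
    have hij' : i < j := hij
    refine Fin.cases (fun h => ?_) (fun i' h => ?_) i hij'
    · refine Fin.cases (fun h' => absurd h' (lt_irrefl _)) (fun j' _ => ?_) j h
      simp [M]
    · refine Fin.cases (fun h' => (Fin.not_lt_zero _ h').elim) (fun j' hlt => ?_) j h
      have hne : i' ≠ j' := fun e => by subst e; exact absurd hlt (lt_irrefl _)
      simp [M, EuclideanSpace.single_apply]
      intro h; exact absurd h.symm hne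
  have hdetM : M.det = c^n := by
    rw [Matrix.det_of_lowerTriangular M hMtri, Fin.prod_univ_succ]
    simp [M, EuclideanSpace.single_apply]
  rw [hmul, Matrix.det_mul, hdetM]


lemma subset_closure_interior {L : Set (Euc n)} (hLv : Convex ℝ L) {q : Euc n}
    (hq : q ∈ interior L) : L ⊆ closure (interior L) := by
  intro y hy
  rw [Metric.mem_closure_iff]
  intro ε hε
  set a : ℝ := min (ε / (2 * (‖q - y‖ + 1))) (1/2) with ha
  have hqy : 0 < ‖q - y‖ + 1 := by positivity
  have ha0 : 0 < a := by
    apply lt_min _ (by norm_num)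
    positivity
  have ha1 : a ≤ 1/2 := min_le_right _ _
  refine ⟨a • q + (1 - a) • y, ?_, ?_⟩
  · exact hLv.combo_interior_closure_mem_interior hq (subset_closure hy) ha0
      (by linarith) (by ring)
  · have : y - (a • q + (1 - a) • y) = a • (y - q) := by
      rw [smul_sub]; module
    rw [dist_eq_norm, this, norm_smul]
    simp only [Real.norm_eq_abs, abs_of_pos ha0]
    have h1 : a ≤ ε / (2 * (‖q - y‖ + 1)) := min_le_left _ _
    have h2 : ‖y - q‖ ≤ ‖q - y‖ + 1 := by rw [norm_sub_rev]; linarith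
    calc a * ‖y - q‖ ≤ (ε / (2 * (‖q - y‖ + 1))) * (‖q - y‖ + 1) := by
          apply mul_le_mul h1 h2 (norm_nonneg _) (by positivity)
      _ = ε / 2 := by field_simp
      _ < ε := by linarith

lemma not_mem_interior_of_normal {L : Set (Euc n)} {x a : Euc n} (ha : a ≠ 0)
    (hnormal : ∀ y ∈ L, ⟪y - x, a⟫ ≤ 0) : x ∉ interior L := by
  intro hx
  obtain ⟨r, hr, hball⟩ := Metric.isOpen_iff.mp isOpen_interior x hx
  have hna : 0 < ‖a‖ := norm_pos_iff.mpr ha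
  set p := x + (r / (2 * ‖a‖)) • a with hp
  have hmem : p ∈ Metric.ball x r := by
    rw [Metric.mem_ball, dist_eq_norm, hp]
    simp only [add_sub_cancel_left, norm_smul, Real.norm_eq_abs]
    rw [abs_of_pos (by positivity)]
    rw [div_mul_eq_mul_div]
    rw [div_lt_iff₀ (by positivity)]
    nlinarith
  have hpL : p ∈ L := interior_subset (hball hmem)
  have h1 := hnormal p hpL
  rw [hp, add_sub_cancel_left, real_inner_smul_left, real_inner_self_eq_norm_sq] at h1
  have h2 : 0 < r / (2*‖a‖) * ‖a‖^2 := by positivity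
  linarith

lemma push_interior {L : Set (Euc n)} (hLv : Convex ℝ L) {q : Euc n}
    (hq : q ∈ interior L) {x a z : Euc n} (hxL : x ∈ L)
    (hnormal : ∀ y ∈ L, ⟪y - x, a⟫ ≤ 0)
    (huniq : ∀ w w' : Euc n, ‖w‖ = 1 → (∀ y ∈ L, ⟪y - x, w⟫ ≤ 0) →
      ‖w'‖ = 1 → (∀ y ∈ L, ⟪y - x, w'⟫ ≤ 0) → w = w')
    (hz : ⟪z, a⟫ < 0) : ∃ δ : ℝ, 0 < δ ∧ x + δ • z ∈ interior L := by
  have ha : a ≠ 0 := by rintro rfl; simp at hz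
  have hna : 0 < ‖a‖ := norm_pos_iff.mpr ha
  by_contra hcon
  push_neg at hcon
  have hx_not : x ∉ interior L := not_mem_interior_of_normal ha hnormal
  set R : Set (Euc n) := (fun t : ℝ => x + t • z) '' (Set.Ici 0) with hR
  have hRconv : Convex ℝ R := by
    rintro p ⟨t1, ht1, rfl⟩ p' ⟨t2, ht2, rfl⟩ c1 c2 hc1 hc2 hc
    have ht1' : (0:ℝ) ≤ t1 := ht1
    have ht2' : (0:ℝ) ≤ t2 := ht2
    refine ⟨c1 * t1 + c2 * t2, Set.mem_Ici.mpr (by positivity), ?_⟩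
    show x + (c1 * t1 + c2 * t2) • z = c1 • (x + t1 • z) + c2 • (x + t2 • z)
    have hx1 : c1 • x + c2 • x = x := by rw [← add_smul, hc, one_smul]
    rw [show c1 • (x + t1 • z) + c2 • (x + t2 • z)
        = (c1 • x + c2 • x) + (c1 * t1 + c2 * t2) • z by
      simp only [smul_add, add_smul, mul_smul]; abel, hx1]
  have hdisj : Disjoint (interior L) R := by
    rw [Set.disjoint_left]
    rintro p hp ⟨t, ht, rfl⟩
    rcases eq_or_lt_of_le (Set.mem_Ici.mp ht) with h | h
    · exact hx_not (by simpa [← h] using hp)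
    · exact hcon t h hp
  obtain ⟨f, u, hfu1, hfu2⟩ :=
    geometric_hahn_banach_open (hLv.interior) isOpen_interior hRconv hdisj
  have hfx_ge : u ≤ f x := hfu2 x ⟨0, Set.mem_Ici.mpr (le_refl 0), by simp⟩
  have hclos : ∀ y ∈ L, f y ≤ u := by
    intro y hy
    have h1 : closure (interior L) ⊆ f ⁻¹' (Set.Iic u) :=
      closure_minimal (fun p hp => le_of_lt (hfu1 p hp))
        (IsClosed.preimage f.continuous isClosed_Iic)
    exact h1 (subset_closure_interior hLv hq hy)
  have hfx : f x = u := le_antisymm (hclos x hxL) hfx_ge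
  set b := (InnerProductSpace.toDual ℝ (Euc n)).symm f with hbdef
  have hb : ∀ y, ⟪b, y⟫ = f y := fun y => InnerProductSpace.toDual_symm_apply
  have hbne : b ≠ 0 := by
    intro h0
    have hq' : f q < u := hfu1 q hq
    have e1 : f q = 0 := by rw [← hb q, h0]; simp
    have e2 : f x = 0 := by rw [← hb x, h0]; simp
    rw [e1, ← e2, hfx] at hq'
    exact lt_irrefl _ hq'
  have hnb : 0 < ‖b‖ := norm_pos_iff.mpr hbne
  set w : Euc n := ‖b‖⁻¹ • b with hw
  have hwnorm : ‖w‖ = 1 := by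
    rw [hw, norm_smul, Real.norm_eq_abs, abs_of_pos (by positivity), inv_mul_cancel₀ (ne_of_gt hnb)]
  have hwnormal : ∀ y ∈ L, ⟪y - x, w⟫ ≤ 0 := by
    intro y hy
    rw [hw, real_inner_smul_right]
    have : ⟪y - x, b⟫ ≤ 0 := by
      rw [real_inner_comm, hb (y - x), map_sub]
      have := hclos y hy
      rw [hfx] at *
      linarith
    have hip : (0:ℝ) < ‖b‖⁻¹ := by positivity
    nlinarith
  set w' : Euc n := ‖a‖⁻¹ • a with hw'
  have hw'norm : ‖w'‖ = 1 := by
    rw [hw', norm_smul, Real.norm_eq_abs, abs_of_pos (by positivity), inv_mul_cancel₀ (ne_of_gt hna)]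
  have hw'normal : ∀ y ∈ L, ⟪y - x, w'⟫ ≤ 0 := by
    intro y hy
    rw [hw', real_inner_smul_right]
    have := hnormal y hy
    have hip : (0:ℝ) < ‖a‖⁻¹ := by positivity
    nlinarith
  have hww : w = w' := huniq w w' hwnorm hwnormal hw'norm hw'normal
  -- f z ≥ 0
  have hfz : 0 ≤ f z := by
    have h3 := hfu2 (x + (1:ℝ) • z) ⟨1, Set.mem_Ici.mpr (by norm_num), rfl⟩
    rw [one_smul, map_add] at h3
    linarith
  have hbz : 0 ≤ ⟪z, w⟫ := by
    rw [hw, real_inner_smul_right, real_inner_comm, hb z]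
    positivity
  have haz : ⟪z, w'⟫ < 0 := by
    rw [hw', real_inner_smul_right]
    have hip : (0:ℝ) < ‖a‖⁻¹ := by positivity
    nlinarith
  rw [hww] at hbz
  linarith

lemma mulVec_Bmat_zero (x : Fin (n+1) → Euc n) (v : Fin (n+1) → ℝ)
    (h : (Bmat x) *ᵥ v = 0) :
    (∑ j, v j = 0) ∧ ∀ k : Fin n, ∑ j, v j * x j k = 0 := by
  constructor
  · have h0 := congrFun h 0
    simpa [Matrix.mulVec, dotProduct, Bmat] using h0
  · intro k
    have hk := congrFun h k.succ
    simp only [Matrix.mulVec, dotProduct, Bmat, Matrix.of_apply, colv_succ,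
      Pi.zero_apply] at hk
    rw [← hk]
    exact Finset.sum_congr rfl (fun j _ => mul_comm _ _)

lemma exists_nondegenerate {L : Set (Euc n)} {c : Euc n} {r : ℝ} (hr : 0 < r)
    (hball : Metric.ball c (2*r) ⊆ L) :
    ∃ q : Fin (n+1) → Euc n, (∀ i, q i ∈ L) ∧ (Bmat q).det ≠ 0 := by
  classical
  set q : Fin (n+1) → Euc n :=
    Fin.cons c (fun j' => c + r • (EuclideanSpace.single j' (1:ℝ))) with hq
  have hmem : ∀ i, q i ∈ L := by
    intro i
    refine Fin.cases ?_ ?_ i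
    · exact hball (by simp [hq]; positivity)
    · intro j'
      apply hball
      rw [Metric.mem_ball, dist_eq_norm, hq]
      simp only [Fin.cons_succ, add_sub_cancel_left, norm_smul, Real.norm_eq_abs,
        abs_of_pos hr, EuclideanSpace.norm_single, norm_one, mul_one]
      linarith
  refine ⟨q, hmem, ?_⟩
  intro hdet
  obtain ⟨v, hvne, hv⟩ := (Matrix.exists_mulVec_eq_zero_iff).mpr hdet
  obtain ⟨hsum, hrow⟩ := mulVec_Bmat_zero q v hv
  have hsucc : ∀ k : Fin n, v k.succ = 0 := by
    intro k
    have := hrow k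
    have hexp : ∀ j : Fin (n+1), v j * q j k = v j * c k + (if j = k.succ then r * v j else 0) := by
      intro j
      refine Fin.cases ?_ ?_ j
      · simp [hq, (Fin.succ_ne_zero k).symm]
      · intro j'
        by_cases hj : j' = k
        · subst hj
          simp [hq, EuclideanSpace.single_apply, mul_add, mul_comm]
        · have hne : j'.succ ≠ k.succ := fun e => hj (Fin.succ_inj.mp e)
          simp [hq, EuclideanSpace.single_apply, Ne.symm hj, hne, mul_add]
    rw [Finset.sum_congr rfl (fun j _ => hexp j), Finset.sum_add_distrib, ← Finset.sum_mul,
      hsum, zero_mul, zero_add, Finset.sum_ite_eq' Finset.univ k.succ] at this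
    simp at this
    exact this.resolve_left (ne_of_gt hr)
  have hv0 : v 0 = 0 := by
    have := hsum
    rw [Fin.sum_univ_succ] at this
    simp [hsucc] at this
    exact this
  apply hvne
  funext j
  refine Fin.cases ?_ ?_ j
  · exact hv0
  · exact hsucc

lemma affineIndependent_of_det {x : Fin (n+1) → Euc n} (hD : (Bmat x).det ≠ 0) :
    AffineIndependent ℝ x := by
  classical
  rw [affineIndependent_iff]
  intro s w hw hsum e he
  by_contra hwe
  set w' : Fin (n+1) → ℝ := fun i => if i ∈ s then w i else 0 with hw'
  have hw'ne : w' ≠ 0 := by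
    intro h0
    have := congrFun h0 e
    simp [hw', he] at this
    exact hwe this
  have hmul : (Bmat x) *ᵥ w' = 0 := by
    funext i
    refine Fin.cases ?_ ?_ i
    · simp only [Matrix.mulVec, dotProduct, Bmat, Matrix.of_apply, colv_zero, one_mul,
        Pi.zero_apply]
      rw [hw', Finset.sum_ite_mem, Finset.univ_inter]
      exact hw
    · intro k
      simp only [Matrix.mulVec, dotProduct, Bmat, Matrix.of_apply, colv_succ,
        Pi.zero_apply]
      have : ∑ j, x j k * w' j = ∑ j, w' j * x j k := Finset.sum_congr rfl (fun j _ => mul_comm _ _)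
      rw [this, hw', Finset.sum_congr rfl (fun j _ => by
        show (if j ∈ s then w j else 0) * x j k = if j ∈ s then w j * x j k else 0
        split <;> simp), Finset.sum_ite_mem, Finset.univ_inter]
      have h5 : (∑ j ∈ s, w j • x j) k = (0 : Euc n) k := by rw [hsum]
      rw [show (∑ j ∈ s, w j • x j) k = ∑ j ∈ s, w j * x j k from by
        rw [show (∑ j ∈ s, w j • x j) k = ∑ j ∈ s, (w j • x j) k from by simp]
        rfl] at h5
      simpa using h5
  exact hD (Matrix.exists_mulVec_eq_zero_iff.mp ⟨w', hw'ne, hmul⟩)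

lemma affineIndependent_scale {x : Fin (n+1) → Euc n} (hx : AffineIndependent ℝ x)
    {c : ℝ} (hc : c ≠ 0) (b : Euc n) :
    AffineIndependent ℝ (fun i => c • x i + b) := by
  classical
  rw [affineIndependent_iff] at hx ⊢
  intro s w hw hsum e he
  apply hx s w hw _ e he
  have : ∑ i ∈ s, w i • (c • x i + b) = c • ∑ i ∈ s, w i • x i + (∑ i ∈ s, w i) • b := by
    rw [Finset.sum_smul, Finset.smul_sum]
    rw [← Finset.sum_add_distrib]
    refine Finset.sum_congr rfl (fun i _ => ?_)
    rw [smul_add, smul_comm]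
  rw [this, hw, zero_smul, add_zero] at hsum
  exact (smul_eq_zero.mp hsum).resolve_left hc

lemma image_hull_subset {Pl : Euc n →ₗ[ℝ] Euc n} {w : Euc n} {R T : Set (Euc n)}
    (hT : Convex ℝ T) (h : ∀ r ∈ R, Pl r + w ∈ T) :
    (fun s => Pl s + w) '' (convexHull ℝ R) ⊆ T := by
  rw [Set.image_subset_iff]
  apply convexHull_min h
  intro p hp p' hp' c1 c2 hc1 hc2 hc
  show Pl (c1 • p + c2 • p') + w ∈ T
  have key : Pl (c1 • p + c2 • p') + w = c1 • (Pl p + w) + c2 • (Pl p' + w) := by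
    rw [map_add, _root_.map_smul, _root_.map_smul, smul_add, smul_add,
      add_add_add_comm, ← add_smul, hc, one_smul]
  rw [key]
  exact hT hp hp' hc1 hc2 hc


def avec (x : Fin (n+1) → Euc n) (i : Fin (n+1)) : Euc n :=
  (InnerProductSpace.toDual ℝ (Euc n)).symm ((glin x i).toContinuousLinearMap)

lemma inner_avec (x : Fin (n+1) → Euc n) (i : Fin (n+1)) (v : Euc n) :
    ⟪avec x i, v⟫ = glin x i v := by
  rw [avec, InnerProductSpace.toDual_symm_apply, LinearMap.coe_toContinuousLinearMap']

lemma inner_avec_sub (x : Fin (n+1) → Euc n) (i : Fin (n+1)) (y z : Euc n) :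
    ⟪avec x i, y - z⟫
      = (Bmat (Function.update x i y)).det - (Bmat (Function.update x i z)).det := by
  rw [inner_avec]
  have := fdet_eq x i y z
  linarith

lemma det_update_self (x : Fin (n+1) → Euc n) (i : Fin (n+1)) :
    (Bmat (Function.update x i (x i))).det = (Bmat x).det := by
  rw [Function.update_eq_self]

lemma det_update_dup (x : Fin (n+1) → Euc n) {i j : Fin (n+1)} (hij : j ≠ i) :
    (Bmat (Function.update x i (x j))).det = 0 := by
  rw [Bmat_update]
  refine Matrix.det_zero_of_column_eq (Ne.symm hij) (fun k => ?_)
  simp [Matrix.updateCol_apply, hij, Bmat]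

lemma inner_avec_diag (x : Fin (n+1) → Euc n) {i j : Fin (n+1)} (hij : j ≠ i) :
    ⟪avec x i, x i - x j⟫ = (Bmat x).det := by
  rw [inner_avec_sub, det_update_self, det_update_dup x hij, sub_zero]

lemma inner_avec_off (x : Fin (n+1) → Euc n) {i j j' : Fin (n+1)} (hj : j ≠ i) (hj' : j' ≠ i) :
    ⟪avec x i, x j - x j'⟫ = 0 := by
  rw [inner_avec_sub, det_update_dup x hj, det_update_dup x hj', sub_zero]

lemma avec_dep {x : Fin (n+1) → Euc n} (hD : (Bmat x).det ≠ 0)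
    {lam : Fin (n+1) → ℝ} (h : ∑ i, lam i • avec x i = 0) :
    ∀ j j', lam j = lam j' := by
  classical
  intro j j'
  by_cases hjj : j = j'
  · rw [hjj]
  have h0 : ⟪∑ i, lam i • avec x i, x j - x j'⟫ = (0:ℝ) := by rw [h]; simp
  rw [sum_inner] at h0
  set D := (Bmat x).det
  have hterm : ∀ i : Fin (n+1), ⟪lam i • avec x i, x j - x j'⟫
      = (if i = j then lam i * D else 0) + (if i = j' then lam i * (-D) else 0) := by
    intro i
    rw [real_inner_smul_left]
    by_cases h1 : i = j
    · rw [if_pos h1, if_neg (h1 ▸ hjj), h1, inner_avec_diag x (Ne.symm hjj)]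
      ring
    · by_cases h2 : i = j'
      · rw [if_neg h1, if_pos h2, h2]
        have he2 : ⟪avec x j', x j - x j'⟫ = -⟪avec x j', x j' - x j⟫ := by
          rw [inner_avec_sub, inner_avec_sub]; ring
        rw [he2, inner_avec_diag x (show j ≠ j' from hjj)]
        ring
      · rw [inner_avec_off x (Ne.symm h1) (Ne.symm h2), if_neg h1, if_neg h2]
        ring
  rw [Finset.sum_congr rfl (fun i _ => hterm i), Finset.sum_add_distrib,
    Finset.sum_ite_eq' Finset.univ j, Finset.sum_ite_eq' Finset.univ j'] at h0
  simp at h0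
  have : (lam j - lam j') * D = 0 := by ring_nf; linarith
  rcases mul_eq_zero.mp this with h | h
  · linarith
  · exact absurd h hD

lemma avec_span {x : Fin (n+1) → Euc n} (hD : (Bmat x).det ≠ 0)
    {u : Euc n} (hu : ∀ i, ⟪avec x i, u⟫ = 0) : u = 0 := by
  classical
  have hx : AffineIndependent ℝ x := affineIndependent_of_det hD
  have hli := (affineIndependent_iff_linearIndependent_vsub ℝ x 0).mp hx
  set e : Fin n → {i : Fin (n+1) // i ≠ 0} := fun k => ⟨k.succ, Fin.succ_ne_zero k⟩ with he
  have hinj : Function.Injective e := by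
    intro a b hab
    have := congrArg (fun s => s.1) hab
    exact Fin.succ_injective _ this
  have hli2 : LinearIndependent ℝ (fun k : Fin n => x (k.succ) - x 0) := by
    have h2 := hli.comp e hinj
    have he3 : ((fun i : {i : Fin (n+1) // i ≠ 0} => x ↑i -ᵥ x 0) ∘ e)
        = fun k : Fin n => x k.succ - x 0 := by
      funext k; simp [e, vsub_eq_sub]
    rwa [he3] at h2
  have hcard : Fintype.card (Fin n) = Module.finrank ℝ (Euc n) := by
    simp [finrank_euclideanSpace_fin]
  have hspan := hli2.span_eq_top_of_card_eq_finrank' hcard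
  have humem : u ∈ Submodule.span ℝ (Set.range (fun k : Fin n => x k.succ - x 0)) := by
    rw [hspan]; trivial
  rw [Submodule.mem_span_range_iff_exists_fun] at humem
  obtain ⟨c, hc⟩ := humem
  have hc0 : ∀ k : Fin n, c k = 0 := by
    intro k
    have h0 := hu k.succ
    rw [← hc, inner_sum] at h0
    have hterm : ∀ m : Fin n, ⟪avec x k.succ, c m • (x m.succ - x 0)⟫
        = if m = k then c m * (Bmat x).det else 0 := by
      intro m
      rw [real_inner_smul_right]
      by_cases hm : m = k
      · rw [if_pos hm, hm, inner_avec_diag x (Ne.symm (Fin.succ_ne_zero k))]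
      · rw [if_neg hm,
          inner_avec_off x (show m.succ ≠ k.succ from fun h => hm (Fin.succ_injective _ h))
          (Ne.symm (Fin.succ_ne_zero k)), mul_zero]
    rw [Finset.sum_congr rfl (fun m _ => hterm m), Finset.sum_ite_eq' Finset.univ k] at h0
    simp at h0
    rcases h0 with h | h
    · exact h
    · exact absurd h hD
  rw [← hc]
  simp [hc0]

end SBNR

set_option maxHeartbeats 2000000 in
/-- A smooth convex body is not reliable: there is an n-simplex S each of whose shadows
can be translated into the corresponding shadow of L, while no translate of S fits
inside L. -/
theorem smooth_body_not_reliable {n : ℕ} (hn : 1 ≤ n)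
    (L : Set (Euc n)) (hLc : IsCompact L) (hLv : Convex ℝ L)
    (hLint : (interior L).Nonempty)
    (hsmooth : ∀ x ∈ frontier L, IsRegularPoint L x) :
    ∃ S : Set (Euc n), IsSimplexOfDim n S ∧
      (∀ u : Euc n, ‖u‖ = 1 →
        ∃ w, transl (projSet (ℝ ∙ u)ᗮ S) w ⊆ projSet (ℝ ∙ u)ᗮ L) ∧
      ¬ ∃ v, transl S v ⊆ L := by
  classical
  obtain ⟨q0, hq0⟩ := hLint
  obtain ⟨rad, hrad, hball⟩ := Metric.isOpen_iff.mp isOpen_interior q0 hq0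
  have hcont : Continuous fun y : Fin (n+1) → Euc n => |(SBNR.Bmat y).det| := by
    apply Continuous.abs
    apply Continuous.matrix_det
    apply continuous_pi; intro i
    apply continuous_pi; intro j
    refine Fin.cases ?_ ?_ i
    · exact continuous_const
    · intro k
      exact (EuclideanSpace.proj k).continuous.comp (continuous_apply j)
  set Kpi : Set (Fin (n+1) → Euc n) := Set.univ.pi (fun _ => L) with hKpi
  have hKc : IsCompact Kpi := isCompact_univ_pi fun _ => hLc
  have hKne : Kpi.Nonempty := ⟨fun _ => q0, fun i _ => interior_subset hq0⟩
  obtain ⟨x, hxK, hxmax'⟩ := hKc.exists_isMaxOn hKne hcont.continuousOn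
  have hxL : ∀ i, x i ∈ L := fun i => hxK i (Set.mem_univ i)
  have hmax : ∀ y : Fin (n+1) → Euc n, (∀ i, y i ∈ L) →
      |(SBNR.Bmat y).det| ≤ |(SBNR.Bmat x).det| :=
    fun y hy => hxmax' (fun i _ => hy i)
  set D := (SBNR.Bmat x).det with hDdef
  have hDne : D ≠ 0 := by
    have hsub : Metric.ball q0 (2*(rad/2)) ⊆ L := by
      intro y hy
      apply interior_subset (hball _)
      simpa [show 2*(rad/2) = rad by ring] using hy
    obtain ⟨q, hqL, hqdet⟩ := SBNR.exists_nondegenerate (by linarith : (0:ℝ) < rad/2) hsub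
    intro h0
    have h1 := hmax q hqL
    rw [h0] at h1
    simp at h1
    exact hqdet h1
  have hDpos : 0 < |D| := abs_pos.mpr hDne
  set s : ℝ := if 0 ≤ D then 1 else -1 with hs
  have hsD : s * D = |D| := by
    rw [hs]; split_ifs with h
    · rw [one_mul, abs_of_nonneg h]
    · rw [neg_one_mul, abs_of_neg (lt_of_not_ge h)]
  have hs_abs : ∀ r : ℝ, s * r ≤ |r| := by
    intro r
    rw [hs]; split_ifs with h
    · rw [one_mul]; exact le_abs_self r
    · rw [neg_one_mul]; exact neg_le_abs r
  have hsne : s ≠ 0 := by rw [hs]; split_ifs <;> norm_num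
  set A : Fin (n+1) → Euc n := fun i => s • SBNR.avec x i with hA
  have keyd : ∀ {i j : Fin (n+1)}, j ≠ i → ⟪A i, x i - x j⟫ = |D| := by
    intro i j hij
    simp only [hA]
    rw [real_inner_smul_left, SBNR.inner_avec_diag x hij, ← hDdef, hsD]
  have keyo : ∀ {i j j' : Fin (n+1)}, j ≠ i → j' ≠ i → ⟪A i, x j - x j'⟫ = 0 := by
    intro i j j' hj hj'
    simp only [hA]
    rw [real_inner_smul_left, SBNR.inner_avec_off x hj hj', mul_zero]
  have hnormalA : ∀ i, ∀ y ∈ L, ⟪y - x i, A i⟫ ≤ 0 := by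
    intro i y hy
    have h2 : |(SBNR.Bmat (Function.update x i y)).det| ≤ |D| := by
      rw [hDdef]
      apply hmax
      intro j
      by_cases hji : j = i
      · subst hji; simpa [Function.update_apply] using hy
      · rw [Function.update_apply, if_neg hji]; exact hxL j
    have h3 : ⟪SBNR.avec x i, y - x i⟫ = (SBNR.Bmat (Function.update x i y)).det - D := by
      rw [SBNR.inner_avec_sub, SBNR.det_update_self, hDdef]
    have h4 : ⟪y - x i, A i⟫ = s * ((SBNR.Bmat (Function.update x i y)).det - D) := by
      rw [real_inner_comm]; simp only [hA]; rw [real_inner_smul_left, h3]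
    rw [h4, mul_sub, hsD]
    have h5 := hs_abs ((SBNR.Bmat (Function.update x i y)).det)
    linarith
  have hAdep : ∀ (lam : Fin (n+1) → ℝ), ∑ i, lam i • A i = 0 → ∀ j j', lam j = lam j' := by
    intro lam hlam j j'
    have h1 : ∑ i, (lam i * s) • SBNR.avec x i = 0 := by
      rw [← hlam]
      refine Finset.sum_congr rfl (fun i _ => ?_)
      simp only [hA]
      rw [mul_smul]
    have h2 := SBNR.avec_dep (show (SBNR.Bmat x).det ≠ 0 from hDne) h1 j j'
    exact mul_right_cancel₀ hsne h2
  have hAspan : ∀ u : Euc n, (∀ i, ⟪A i, u⟫ = 0) → u = 0 := by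
    intro u hu
    refine SBNR.avec_span (show (SBNR.Bmat x).det ≠ 0 from hDne) (fun i => ?_)
    have h1 := hu i
    simp only [hA] at h1
    rw [real_inner_smul_left] at h1
    exact (mul_eq_zero.mp h1).resolve_left hsne
  have hAne : ∀ i, A i ≠ 0 := by
    intro i h0
    have : Nontrivial (Fin (n+1)) := Fin.nontrivial_iff_two_le.mpr (by omega)
    obtain ⟨j, hj⟩ := exists_ne i
    have h1 := keyd hj
    rw [h0, inner_zero_left] at h1
    exact absurd h1.symm (ne_of_gt hDpos)
  have hfront : ∀ i, x i ∈ frontier L := by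
    intro i
    rw [hLc.isClosed.frontier_eq]
    exact ⟨hxL i, SBNR.not_mem_interior_of_normal (hAne i) (hnormalA i)⟩
  have huniq : ∀ i, ∀ w w' : Euc n, ‖w‖ = 1 → (∀ y ∈ L, ⟪y - x i, w⟫ ≤ 0) →
      ‖w'‖ = 1 → (∀ y ∈ L, ⟪y - x i, w'⟫ ≤ 0) → w = w' := by
    intro i w w' h1 h2 h3 h4
    obtain ⟨-, ν, hν, hu⟩ := hsmooth (x i) (hfront i)
    rw [hu w ⟨h1, h2⟩, hu w' ⟨h3, h4⟩]
  set g : Euc n := x 0 with hg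
  set Q : Euc n → ℝ → Prop := fun u ε => ∃ (v : Euc n) (t : Fin (n+1) → ℝ),
    ∀ i, (1+ε) • (x i - g) + g + v + t i • u ∈ interior L with hQdef
  have hQmono : ∀ u ε ε', Q u ε → 0 < ε' → ε' ≤ ε → Q u ε' := by
    intro u εa εb hQe hεb hle
    simp only [hQdef] at hQe ⊢
    obtain ⟨v, t, hvt⟩ := hQe
    have hεa : 0 < εa := lt_of_lt_of_le hεb hle
    set θ : ℝ := εb / εa with hθ
    have hθ0 : 0 < θ := div_pos hεb hεa
    have hθ1 : θ ≤ 1 := (div_le_one hεa).mpr hle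
    have hθε : θ * εa = εb := div_mul_cancel₀ _ (ne_of_gt hεa)
    refine ⟨θ • v, fun i => θ * t i, fun i => ?_⟩
    have hid : (1+εb) • (x i - g) + g + θ • v + (θ * t i) • u
        = θ • ((1+εa) • (x i - g) + g + v + t i • u) + (1 - θ) • x i := by
      rw [← hθε]
      module
    rw [hid]
    exact hLv.combo_interior_closure_mem_interior (hvt i) (subset_closure (hxL i)) hθ0
      (by linarith) (by ring)
  have hQopen : ∀ u ε, Q u ε → ∃ O : Set (Euc n), IsOpen O ∧ u ∈ O ∧ ∀ u' ∈ O, Q u' ε := by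
    intro u εa hQe
    simp only [hQdef] at hQe ⊢
    obtain ⟨v, t, hvt⟩ := hQe
    refine ⟨⋂ i, (fun u' : Euc n => (1+εa) • (x i - g) + g + v + t i • u') ⁻¹' interior L,
      isOpen_iInter_of_finite (fun i => IsOpen.preimage ?_ isOpen_interior), ?_, ?_⟩
    · exact continuous_const.add (continuous_id.const_smul (t i))
    · exact Set.mem_iInter.mpr (fun i => hvt i)
    · intro u' hu'
      exact ⟨v, t, fun i => Set.mem_iInter.mp hu' i⟩
  have hQex : ∀ u : Euc n, ‖u‖ = 1 → ∃ ε > 0, Q u ε := by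
    intro u hu
    set Iset : Finset (Fin (n+1)) := Finset.univ.filter (fun i => ⟪A i, u⟫ = 0) with hIset
    obtain ⟨z, hzz⟩ : ∃ z : Euc n, ∀ i ∈ Iset, ⟪A i, z⟫ < 0 := by
      rcases Finset.eq_empty_or_nonempty Iset with hI | hI
      · exact ⟨0, by simp [hI]⟩
      have hIne : ∃ i0, i0 ∉ Iset := by
        by_contra hall
        push_neg at hall
        have hz0 : u = 0 := hAspan u (fun i => by
          have h6 := hall i
          simp only [hIset, Finset.mem_filter, Finset.mem_univ, true_and] at h6
          exact h6)
        rw [hz0] at hu; simp at hu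
      obtain ⟨i0, hi0⟩ := hIne
      have hAinj : Set.InjOn A ↑Iset := by
        intro i _ j _ hij
        by_contra hne
        have h1 : ⟪A i, x i - x j⟫ = |D| := keyd (Ne.symm hne)
        have h2 : ⟪A j, x j - x i⟫ = |D| := keyd hne
        have h3 : ⟪A j, x i - x j⟫ = -|D| := by
          rw [← neg_sub (x j) (x i), inner_neg_right, h2]
        rw [hij, h3] at h1
        linarith
      have h0notin : (0 : Euc n) ∉ convexHull ℝ (A '' ↑Iset) := by
        intro h0
        rw [← Finset.coe_image, Finset.convexHull_eq] at h0
        obtain ⟨w, hw0, hw1, hwc⟩ := h0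
        set lam : Fin (n+1) → ℝ := fun i => if i ∈ Iset then w (A i) else 0 with hlam
        have hinj' : ∀ a ∈ Iset, ∀ b ∈ Iset, A a = A b → a = b :=
          fun a ha b hb h => hAinj (Finset.mem_coe.mpr ha) (Finset.mem_coe.mpr hb) h
        have hsum1 : ∑ i, lam i = 1 := by
          rw [hlam]
          simp only []
          rw [Finset.sum_ite_mem, Finset.univ_inter]
          rw [Finset.sum_image hinj'] at hw1
          exact hw1
        have hsumA : ∑ i, lam i • A i = 0 := by
          have hcm := hwc
          rw [Finset.centerMass_eq_of_sum_1 _ _ hw1] at hcm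
          rw [Finset.sum_image hinj'] at hcm
          have he1 : ∑ i, lam i • A i = ∑ i ∈ Iset, w (A i) • A i := by
            rw [hlam]
            rw [Finset.sum_congr rfl (fun i (_ : i ∈ Finset.univ) => by
              show (if i ∈ Iset then w (A i) else 0) • A i
                  = if i ∈ Iset then w (A i) • A i else 0
              split <;> simp)]
            rw [Finset.sum_ite_mem, Finset.univ_inter]
          rw [he1, ← hcm]
          simp
        have hall := hAdep lam hsumA
        have hz1 : lam i0 = 0 := by rw [hlam]; simp [hi0]
        have : ∑ i, lam i = 0 := by
          rw [Finset.sum_congr rfl (fun i _ => (hall i i0).trans hz1)]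
          simp
        rw [hsum1] at this
        norm_num at this
      obtain ⟨f, c, hfc1, hfc2⟩ := geometric_hahn_banach_closed_point
        (convex_convexHull ℝ _)
        (((Set.toFinite (A '' ↑Iset)).isCompact_convexHull ℝ).isClosed) h0notin
      refine ⟨(InnerProductSpace.toDual ℝ (Euc n)).symm f, fun i hi => ?_⟩
      have h7 : f (A i) < c := hfc1 _ (subset_convexHull ℝ _ (Set.mem_image_of_mem A hi))
      have hc0 : c < 0 := by simpa using hfc2
      have h8 : ⟪A i, (InnerProductSpace.toDual ℝ (Euc n)).symm f⟫ = f (A i) := by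
        rw [real_inner_comm]; exact InnerProductSpace.toDual_symm_apply
      linarith
    have hstep : ∀ i : Fin (n+1), ∃ (ti δi : ℝ), 0 < δi ∧
        ∀ δ : ℝ, 0 < δ → δ ≤ δi → x i + ti • u + δ • z ∈ interior L := by
      intro i
      by_cases hiI : i ∈ Iset
      · obtain ⟨δ0, hδ0, hδ0in⟩ := SBNR.push_interior hLv hq0 (hxL i) (hnormalA i) (huniq i)
          (show ⟪z, A i⟫ < 0 from by rw [real_inner_comm]; exact hzz i hiI)
        refine ⟨0, δ0, hδ0, fun δ hδ hδle => ?_⟩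
        have hδ0ne : δ0 ≠ 0 := ne_of_gt hδ0
        have hid : x i + (0:ℝ) • u + δ • z
            = (δ/δ0) • (x i + δ0 • z) + (1 - δ/δ0) • x i := by
          match_scalars <;> field_simp <;> ring
        rw [hid]
        exact hLv.combo_interior_closure_mem_interior hδ0in (subset_closure (hxL i))
          (div_pos hδ hδ0) (by rw [sub_nonneg]; exact (div_le_one hδ0).mpr hδle) (by ring)
      · have hAiu : ⟪A i, u⟫ ≠ 0 := by
          simp only [hIset, Finset.mem_filter, Finset.mem_univ, true_and] at hiI
          exact hiI
        obtain ⟨δ1, hδ1, hδ1in⟩ := SBNR.push_interior hLv hq0 (hxL i) (hnormalA i) (huniq i)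
          (show ⟪(-⟪A i, u⟫) • u, A i⟫ < 0 from by
            have h9 : (0:ℝ) < ⟪A i, u⟫ * ⟪A i, u⟫ := mul_self_pos.mpr hAiu
            have hc : ⟪u, A i⟫ = ⟪A i, u⟫ := real_inner_comm (A i) u
            rw [real_inner_smul_left, hc, neg_mul]
            exact neg_lt_zero.mpr h9)
        obtain ⟨r0, hr0, hball0⟩ := Metric.isOpen_iff.mp isOpen_interior _ hδ1in
        refine ⟨δ1 * (-⟪A i, u⟫), r0 / (2 * (‖z‖ + 1)), by positivity, fun δ hδ hδle => ?_⟩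
        apply hball0
        rw [Metric.mem_ball, dist_eq_norm]
        have hid : x i + (δ1 * (-⟪A i, u⟫)) • u + δ • z - (x i + δ1 • ((-⟪A i, u⟫) • u))
            = δ • z := by module
        rw [hid, norm_smul, Real.norm_eq_abs, abs_of_pos hδ]
        have hz1 : ‖z‖ ≤ ‖z‖ + 1 := by linarith
        calc δ * ‖z‖ ≤ (r0 / (2 * (‖z‖ + 1))) * (‖z‖ + 1) :=
              mul_le_mul hδle hz1 (norm_nonneg _) (by positivity)
          _ = r0 / 2 := by field_simp
          _ < r0 := by linarith
    choose tfun δfun hδpos hδin using hstep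
    have hunine : (Finset.univ : Finset (Fin (n+1))).Nonempty := Finset.univ_nonempty
    set δ : ℝ := Finset.univ.inf' hunine δfun with hδdef
    have hδ0 : 0 < δ := (Finset.lt_inf'_iff hunine).mpr (fun i _ => hδpos i)
    have hpts : ∀ i, x i + tfun i • u + δ • z ∈ interior L :=
      fun i => hδin i δ hδ0 (Finset.inf'_le _ (Finset.mem_univ i))
    have hstep2 : ∀ i : Fin (n+1), ∃ εi : ℝ, 0 < εi ∧ ∀ ε', 0 < ε' → ε' ≤ εi →
        (1+ε') • (x i - g) + g + δ • z + tfun i • u ∈ interior L := by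
      intro i
      obtain ⟨r1, hr1, hball1⟩ := Metric.isOpen_iff.mp isOpen_interior _ (hpts i)
      refine ⟨r1 / (2 * (‖x i - g‖ + 1)), by positivity, fun ε' hε' hεle => ?_⟩
      apply hball1
      rw [Metric.mem_ball, dist_eq_norm]
      have hid : (1+ε') • (x i - g) + g + δ • z + tfun i • u - (x i + tfun i • u + δ • z)
          = ε' • (x i - g) := by module
      rw [hid, norm_smul, Real.norm_eq_abs, abs_of_pos hε']
      have hz1 : ‖x i - g‖ ≤ ‖x i - g‖ + 1 := by linarith
      calc ε' * ‖x i - g‖ ≤ (r1 / (2 * (‖x i - g‖ + 1))) * (‖x i - g‖ + 1) :=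
            mul_le_mul hεle hz1 (norm_nonneg _) (by positivity)
        _ = r1 / 2 := by field_simp
        _ < r1 := by linarith
    choose εfun hεpos hεin using hstep2
    refine ⟨Finset.univ.inf' hunine εfun,
      (Finset.lt_inf'_iff hunine).mpr (fun i _ => hεpos i), ?_⟩
    simp only [hQdef]
    exact ⟨δ • z, tfun, fun i => hεin i _
      ((Finset.lt_inf'_iff hunine).mpr (fun j _ => hεpos j))
      (Finset.inf'_le _ (Finset.mem_univ i))⟩
  obtain ⟨ε, hε, hQall⟩ : ∃ ε > 0, ∀ u : Euc n, ‖u‖ = 1 → Q u ε := by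
    have hstep : ∀ u : Metric.sphere (0:Euc n) 1, ∃ (εu : ℝ) (O : Set (Euc n)),
        0 < εu ∧ IsOpen O ∧ ↑u ∈ O ∧ ∀ u' ∈ O, Q u' εu := by
      rintro ⟨u, huu⟩
      have hu1 : ‖u‖ = 1 := mem_sphere_zero_iff_norm.mp huu
      obtain ⟨εu, hεu, hQu⟩ := hQex u hu1
      obtain ⟨O, hO1, hO2, hO3⟩ := hQopen u εu hQu
      exact ⟨εu, O, hεu, hO1, hO2, hO3⟩
    choose εf Of hεf hOopen hOmem hOQ using hstep
    have hcover : Metric.sphere (0:Euc n) 1 ⊆ ⋃ su : Metric.sphere (0:Euc n) 1, Of su :=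
      fun u huS => Set.mem_iUnion.mpr ⟨⟨u, huS⟩, hOmem _⟩
    obtain ⟨F, hF⟩ := (isCompact_sphere (0:Euc n) 1).elim_finite_subcover Of hOopen hcover
    have hFne : F.Nonempty := by
      have he0 : (EuclideanSpace.single (⟨0, by omega⟩ : Fin n) (1:ℝ))
          ∈ Metric.sphere (0:Euc n) 1 := by
        rw [mem_sphere_zero_iff_norm, EuclideanSpace.norm_single]
        norm_num
      obtain ⟨sU, hsU⟩ := Set.mem_iUnion₂.mp (hF he0)
      exact ⟨sU, hsU.1⟩
    refine ⟨F.inf' hFne εf, (Finset.lt_inf'_iff hFne).mpr (fun i _ => hεf i), fun u hu1 => ?_⟩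
    obtain ⟨sU, hsUF, hsO⟩ := Set.mem_iUnion₂.mp (hF (mem_sphere_zero_iff_norm.mpr hu1))
    exact hQmono u (εf sU) _ (hOQ sU u hsO)
      ((Finset.lt_inf'_iff hFne).mpr (fun i _ => hεf i)) (Finset.inf'_le _ hsUF)
  set p : Fin (n+1) → Euc n := fun i => (1+ε) • (x i - g) + g with hp
  have hpmem : ∀ i, p i ∈ convexHull ℝ (Set.range p) :=
    fun i => subset_convexHull ℝ _ (Set.mem_range_self i)
  refine ⟨convexHull ℝ (Set.range p), ⟨p, ?_, rfl⟩, ?_, ?_⟩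
  · -- affine independence
    have hxind : AffineIndependent ℝ x := SBNR.affineIndependent_of_det hDne
    have hne1 : (1+ε : ℝ) ≠ 0 := by linarith
    have heq : (fun i => (1+ε) • x i + (g - (1+ε) • g)) = p := by
      funext i; simp only [hp]; module
    exact heq ▸ SBNR.affineIndependent_scale hxind hne1 (g - (1+ε) • g)
  · -- projections fit
    intro u hu1
    have hQu := hQall u hu1
    simp only [hQdef] at hQu
    obtain ⟨v, t, hvt⟩ := hQu
    set ξ : Submodule ℝ (Euc n) := (ℝ ∙ u)ᗮ with hξ
    set Pl : Euc n →ₗ[ℝ] Euc n := ξ.subtype.comp (ξ.orthogonalProjection).toLinearMap with hPl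
    have hvt' : ∀ i, p i + v + t i • u ∈ interior L := by
      intro i; simp only [hp]; exact hvt i
    have hPu : Pl u = 0 := by
      have hmem : u ∈ ξᗮ := by
        rw [hξ, Submodule.orthogonal_orthogonal]
        exact Submodule.mem_span_singleton_self u
      show ((ξ.orthogonalProjection u : ξ) : Euc n) = 0
      rw [Submodule.orthogonalProjectionOnto_apply_of_mem_orthogonal hmem]
      rfl
    refine ⟨Pl v, ?_⟩
    have htr : transl (projSet ξ (convexHull ℝ (Set.range p))) (Pl v)
        = (fun y => Pl y + Pl v) '' (convexHull ℝ (Set.range p)) := by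
      simp only [transl, projSet, Set.image_image]
      rfl
    rw [htr]
    have hTconv : Convex ℝ (projSet ξ L) := by
      have : projSet ξ L = Pl '' L := rfl
      rw [this]
      exact hLv.linear_image Pl
    apply SBNR.image_hull_subset hTconv
    rintro r ⟨i, rfl⟩
    refine ⟨p i + v + t i • u, interior_subset (hvt' i), ?_⟩
    show Pl (p i + v + t i • u) = Pl (p i) + Pl v
    rw [map_add, map_add, _root_.map_smul, hPu, smul_zero, add_zero]
  · -- no translate fits
    rintro ⟨v, hv⟩
    have hpv : ∀ i, p i + v ∈ L := fun i => hv ⟨p i, hpmem i, rfl⟩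
    have hyeq : (fun i => p i + v) = fun i => (1+ε) • x i + ((g + v) - (1+ε) • g) := by
      funext i; simp only [hp]; module
    have hdet := hmax (fun i => p i + v) hpv
    rw [hyeq, SBNR.Bmat_affine x (1+ε) ((g + v) - (1+ε) • g), abs_mul,
      abs_of_pos (pow_pos (show (0:ℝ) < 1+ε by linarith) n)] at hdet
    have h1 : (1:ℝ) < (1+ε)^n := one_lt_pow₀ (by linarith) (by omega)
    nlinarith [hDpos, hdet]
end
end

section
/- Let P be a convex polytope in ℝⁿ with nonempty interior, and let ξ be a proper nonzero linear subspace of ℝⁿ such that every outer unit facet normal of P lies either in ξ or in ξ^⊥. Then there exist polytopes P₁ ⊆ ξ and P₂ ⊆ ξ^⊥ such that P is a translate of the Minkowski sum P₁ + P₂. -/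
open scoped Pointwise RealInnerProductSpace
noncomputable section

namespace PolySplit

open Module

variable {n : ℕ}

lemma convex_halfspace_inner (u : Euc n) (c : ℝ) : Convex ℝ {y : Euc n | ⟪y, u⟫ ≤ c} :=
  convex_halfSpace_le ⟨fun x y => inner_add_left x y u, fun r x => real_inner_smul_left x u r⟩ c

lemma hull_inner_le {S : Finset (Euc n)} {u : Euc n} {c : ℝ}
    (h : ∀ x ∈ S, ⟪x, u⟫ ≤ c) {y : Euc n} (hy : y ∈ convexHull ℝ (S : Set (Euc n))) :
    ⟪y, u⟫ ≤ c :=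
  convexHull_min h (convex_halfspace_inner u c) hy

lemma exists_argmax {S : Finset (Euc n)} (hS : S.Nonempty) (u : Euc n) :
    ∃ x ∈ S, x ∈ supportSet (convexHull ℝ (S : Set (Euc n))) u := by
  obtain ⟨x, hx, hmax⟩ := S.exists_max_image (fun x => ⟪x, u⟫) hS
  exact ⟨x, hx, subset_convexHull ℝ _ hx, fun y hy => hull_inner_le hmax hy⟩

lemma supportSet_smul (P : Set (Euc n)) {r : ℝ} (hr : 0 < r) (u : Euc n) :
    supportSet P (r • u) = supportSet P u := by
  ext x
  simp only [supportSet, Set.mem_setOf_eq, real_inner_smul_right]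
  exact ⟨fun ⟨h1, h2⟩ => ⟨h1, fun y hy => (mul_le_mul_iff_right₀ hr).mp (h2 y hy)⟩,
    fun ⟨h1, h2⟩ => ⟨h1, fun y hy => (mul_le_mul_iff_right₀ hr).mpr (h2 y hy)⟩⟩

lemma inner_eq_of_mem_supportSet {P : Set (Euc n)} {u x y : Euc n}
    (hx : x ∈ supportSet P u) (hy : y ∈ supportSet P u) : ⟪x, u⟫ = ⟪y, u⟫ :=
  le_antisymm (hy.2 x hx.1) (hx.2 y hy.1)

lemma vectorSpan_supportSet_le {P : Set (Euc n)} (u : Euc n) :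
    vectorSpan ℝ (supportSet P u) ≤ (ℝ ∙ u)ᗮ := by
  rw [vectorSpan, Submodule.span_le]
  rintro v ⟨x, hx, y, hy, rfl⟩
  rw [SetLike.mem_coe, Submodule.mem_orthogonal]
  rintro z hz
  obtain ⟨r, rfl⟩ := Submodule.mem_span_singleton.mp hz
  simp only [vsub_eq_sub]
  rw [inner_sub_right, real_inner_smul_left, real_inner_smul_left]
  have h := inner_eq_of_mem_supportSet hx hy
  rw [real_inner_comm u x, real_inner_comm u y] at h
  rw [h]; ring

lemma finrank_supportSet_le {P : Set (Euc n)} {u : Euc n} (hu : u ≠ 0) :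
    finrank ℝ (vectorSpan ℝ (supportSet P u)) ≤ n - 1 := by
  have h1 : finrank ℝ (ℝ ∙ u) + finrank ℝ (ℝ ∙ u)ᗮ = n := by
    rw [Submodule.finrank_add_finrank_orthogonal, finrank_euclideanSpace_fin]
  rw [finrank_span_singleton hu] at h1
  have := Submodule.finrank_mono (vectorSpan_supportSet_le (P := P) u)
  omega

lemma vectorSpan_top {P : Set (Euc n)} (hint : (interior P).Nonempty) :
    vectorSpan ℝ P = ⊤ := by
  obtain ⟨p, hp⟩ := hint
  rw [mem_interior_iff_mem_nhds, Metric.mem_nhds_iff] at hp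
  obtain ⟨ε, hε, hball⟩ := hp
  rw [Submodule.eq_top_iff']
  intro v
  rcases eq_or_ne v 0 with rfl | hv
  · exact Submodule.zero_mem _
  have hvn : 0 < ‖v‖ := norm_pos_iff.mpr hv
  have hδ : 0 < ε / (2 * ‖v‖) := div_pos hε (by linarith)
  have hmem : p + (ε / (2 * ‖v‖)) • v ∈ P := by
    apply hball
    rw [Metric.mem_ball, dist_eq_norm, add_sub_cancel_left, norm_smul,
      Real.norm_eq_abs, abs_of_pos hδ, div_mul_eq_mul_div, div_lt_iff₀ (by linarith)]
    nlinarith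
  have hp' : p ∈ P := hball (Metric.mem_ball_self hε)
  have : (p + (ε / (2 * ‖v‖)) • v) -ᵥ p ∈ vectorSpan ℝ P := vsub_mem_vectorSpan ℝ hmem hp'
  rw [vsub_eq_sub, add_sub_cancel_left] at this
  have := Submodule.smul_mem _ (ε / (2 * ‖v‖))⁻¹ this
  rwa [smul_smul, inv_mul_cancel₀ (ne_of_gt hδ), one_smul] at this

lemma inner_lt_of_interior {P : Set (Euc n)} {p u b : Euc n} (hp : p ∈ interior P)
    (hu : u ≠ 0) (hb : b ∈ supportSet P u) : ⟪p, u⟫ < ⟪b, u⟫ := by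
  rw [mem_interior_iff_mem_nhds, Metric.mem_nhds_iff] at hp
  obtain ⟨ε, hε, hball⟩ := hp
  have hun : 0 < ‖u‖ := norm_pos_iff.mpr hu
  have hq : p + (ε / (2 * ‖u‖)) • u ∈ P := by
    apply hball
    rw [Metric.mem_ball, dist_eq_norm, add_sub_cancel_left, norm_smul,
      Real.norm_eq_abs, abs_of_pos (div_pos hε (by linarith)), div_mul_eq_mul_div,
      div_lt_iff₀ (by linarith)]
    nlinarith
  have := hb.2 _ hq
  rw [inner_add_left, real_inner_smul_left, real_inner_self_eq_norm_sq] at this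
  have hpos : 0 < ε / (2 * ‖u‖) * ‖u‖ ^ 2 :=
    mul_pos (div_pos hε (by linarith)) (pow_pos hun 2)
  linarith

lemma grow_core {S : Finset (Euc n)} {P : Set (Euc n)}
    (hP : P = convexHull ℝ (S : Set (Euc n)))
    {u w x₀ x₁ : Euc n} {c : ℝ} (hu : u ≠ 0)
    (hx₀ : x₀ ∈ supportSet P u)
    (huw : ⟪u, w⟫ = 0)
    (hVw : ∀ v ∈ vectorSpan ℝ (supportSet P u), ⟪v, w⟫ = 0)
    (hc : ∀ f ∈ supportSet P u, ⟪f, w⟫ = c)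
    (hx₁S : x₁ ∈ S) (hx₁ : c < ⟪x₁, w⟫) :
    ∃ u' : Euc n, u' ≠ 0 ∧ supportSet P u ⊆ supportSet P u' ∧
      finrank ℝ (vectorSpan ℝ (supportSet P u)) <
        finrank ℝ (vectorSpan ℝ (supportSet P u')) := by
  have hSP : (S : Set (Euc n)) ⊆ P := by rw [hP]; exact subset_convexHull ℝ _
  -- points strictly above level c are not in the support set, hence strictly suboptimal
  have hstrict : ∀ x ∈ S, c < ⟪x, w⟫ → ⟪x, u⟫ < ⟪x₀, u⟫ := by
    intro x hxS hxw
    rcases lt_or_eq_of_le (hx₀.2 x (hSP hxS)) with h | h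
    · exact h
    · exfalso
      have hxF : x ∈ supportSet P u :=
        ⟨hSP hxS, fun y hy => le_of_le_of_eq (hx₀.2 y hy) h.symm⟩
      exact absurd (hc x hxF) (ne_of_gt hxw)
  set T : Finset (Euc n) := S.filter (fun x => c < ⟪x, w⟫) with hT
  have hTne : T.Nonempty := ⟨x₁, Finset.mem_filter.mpr ⟨hx₁S, hx₁⟩⟩
  set g : Euc n → ℝ := fun x => (⟪x₀, u⟫ - ⟪x, u⟫) / (⟪x, w⟫ - c) with hg
  obtain ⟨xs, hxsT, hxsmin⟩ := T.exists_min_image g hTne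
  obtain ⟨hxsS, hxsw⟩ := Finset.mem_filter.mp hxsT
  have hden : 0 < ⟪xs, w⟫ - c := sub_pos.mpr hxsw
  have hnum : 0 < ⟪x₀, u⟫ - ⟪xs, u⟫ := sub_pos.mpr (hstrict xs hxsS hxsw)
  set t : ℝ := g xs with ht
  have htpos : 0 < t := div_pos hnum hden
  set u' : Euc n := u + t • w with hu'
  have hx₀w : ⟪x₀, w⟫ = c := hc x₀ hx₀
  have hval : ∀ y : Euc n, ⟪y, u'⟫ = ⟪y, u⟫ + t * ⟪y, w⟫ := by
    intro y; rw [hu', inner_add_right, real_inner_smul_right]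
  -- the maximum of u' over S is attained with value ⟪x₀,u⟫ + t * c
  have hmax : ∀ x ∈ S, ⟪x, u'⟫ ≤ ⟪x₀, u⟫ + t * c := by
    intro x hxS
    rw [hval]
    rcases le_or_gt ⟪x, w⟫ c with h | h
    · have h1 : ⟪x, u⟫ ≤ ⟪x₀, u⟫ := hx₀.2 x (hSP hxS)
      nlinarith
    · have hxT : x ∈ T := Finset.mem_filter.mpr ⟨hxS, h⟩
      have h2 : t ≤ g x := hxsmin x hxT
      have hdx : 0 < ⟪x, w⟫ - c := sub_pos.mpr h
      rw [hg, le_div_iff₀ hdx] at h2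
      nlinarith
  have hmaxP : ∀ y ∈ P, ⟪y, u'⟫ ≤ ⟪x₀, u⟫ + t * c := by
    intro y hy; rw [hP] at hy; exact hull_inner_le hmax hy
  have hFsub : supportSet P u ⊆ supportSet P u' := by
    intro f hf
    have hfu : ⟪f, u⟫ = ⟪x₀, u⟫ := inner_eq_of_mem_supportSet hf hx₀
    have hfval : ⟪f, u'⟫ = ⟪x₀, u⟫ + t * c := by rw [hval, hfu, hc f hf]
    exact ⟨hf.1, fun y hy => by rw [hfval]; exact hmaxP y hy⟩
  have hxs' : xs ∈ supportSet P u' := by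
    have : ⟪xs, u'⟫ = ⟪x₀, u⟫ + t * c := by
      rw [hval]
      have : t * (⟪xs, w⟫ - c) = ⟪x₀, u⟫ - ⟪xs, u⟫ := by
        rw [ht, hg]; exact div_mul_cancel₀ _ (ne_of_gt hden)
      nlinarith
    exact ⟨hSP hxsS, fun y hy => by rw [this]; exact hmaxP y hy⟩
  refine ⟨u', ?_, hFsub, ?_⟩
  · intro h0
    have : ⟪u, u'⟫ = ‖u‖ ^ 2 := by
      rw [hval, real_inner_self_eq_norm_sq, huw]; ring
    rw [h0, inner_zero_right] at this
    exact hu (by simpa using (norm_eq_zero.mp (by nlinarith [sq_nonneg ‖u‖])))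
  · apply Submodule.finrank_lt_finrank_of_lt
    rw [SetLike.lt_iff_le_and_exists]
    refine ⟨vectorSpan_mono ℝ hFsub, xs -ᵥ x₀, vsub_mem_vectorSpan ℝ hxs' (hFsub hx₀), ?_⟩
    intro hmem
    have := hVw _ hmem
    rw [vsub_eq_sub, inner_sub_left, hx₀w] at this
    linarith

lemma grow {S : Finset (Euc n)} {P : Set (Euc n)}
    (hP : P = convexHull ℝ (S : Set (Euc n))) (hint : (interior P).Nonempty)
    {u : Euc n} (hu : u ≠ 0)
    (hdim : finrank ℝ (vectorSpan ℝ (supportSet P u)) + 1 < n) :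
    ∃ u' : Euc n, u' ≠ 0 ∧ supportSet P u ⊆ supportSet P u' ∧
      finrank ℝ (vectorSpan ℝ (supportSet P u)) <
        finrank ℝ (vectorSpan ℝ (supportSet P u')) := by
  have hSne : S.Nonempty := by
    rcases S.eq_empty_or_nonempty with rfl | h
    · exfalso
      rw [Finset.coe_empty, convexHull_empty] at hP
      obtain ⟨p, hp⟩ := hint
      rw [hP] at hp
      simpa using interior_subset hp
    · exact h
  obtain ⟨x₀, hx₀S, hx₀⟩ := exists_argmax hSne u
  rw [← hP] at hx₀
  set V : Submodule ℝ (Euc n) := vectorSpan ℝ (supportSet P u) with hV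
  set W : Submodule ℝ (Euc n) := V ⊔ (ℝ ∙ u) with hW
  have hWrank : finrank ℝ W < n := by
    have h1 : finrank ℝ W + finrank ℝ (V ⊓ (ℝ ∙ u) : Submodule ℝ (Euc n))
        = finrank ℝ V + finrank ℝ (ℝ ∙ u) :=
      Submodule.finrank_sup_add_finrank_inf_eq V (ℝ ∙ u)
    have h2 : finrank ℝ (ℝ ∙ u) = 1 := finrank_span_singleton hu
    omega
  have hWbot : Wᗮ ≠ ⊥ := by
    intro h
    have h1 : finrank ℝ W + finrank ℝ Wᗮ = n := by
      rw [Submodule.finrank_add_finrank_orthogonal, finrank_euclideanSpace_fin]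
    rw [h, finrank_bot] at h1
    omega
  obtain ⟨w, hwW, hw0⟩ := (Submodule.ne_bot_iff _).mp hWbot
  have huw : ⟪u, w⟫ = 0 :=
    (Submodule.mem_orthogonal _ _).mp hwW u (le_sup_right (α := Submodule ℝ (Euc n))
      (Submodule.mem_span_singleton_self u))
  have hVw : ∀ v ∈ V, ⟪v, w⟫ = 0 := fun v hv =>
    (Submodule.mem_orthogonal _ _).mp hwW v (le_sup_left (α := Submodule ℝ (Euc n)) hv)
  have hc : ∀ f ∈ supportSet P u, ⟪f, w⟫ = ⟪x₀, w⟫ := by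
    intro f hf
    have : f -ᵥ x₀ ∈ V := vsub_mem_vectorSpan ℝ hf hx₀
    have := hVw _ this
    rw [vsub_eq_sub, inner_sub_left] at this
    linarith
  -- some vertex is off the hyperplane ⟪·,w⟫ = ⟪x₀,w⟫
  have hne : ∃ x ∈ S, ⟪x, w⟫ ≠ ⟪x₀, w⟫ := by
    by_contra h
    push_neg at h
    obtain ⟨p, hp⟩ := hint
    have hball := hp
    rw [mem_interior_iff_mem_nhds, Metric.mem_nhds_iff] at hball
    obtain ⟨ε, hε, hball⟩ := hball
    have hwn : 0 < ‖w‖ := norm_pos_iff.mpr hw0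
    have hplane : ∀ y ∈ P, ⟪y, w⟫ = ⟪x₀, w⟫ := by
      intro y hy
      rw [hP] at hy
      have h1 : ⟪y, w⟫ ≤ ⟪x₀, w⟫ := hull_inner_le (fun x hx => (h x hx).le) hy
      have h2 : ⟪y, -w⟫ ≤ ⟪x₀, -w⟫ := by
        apply hull_inner_le (fun x hx => ?_) hy
        rw [inner_neg_right, inner_neg_right]
        exact neg_le_neg (h x hx).ge
      rw [inner_neg_right, inner_neg_right, neg_le_neg_iff] at h2
      linarith
    have hq : p + (ε / (2 * ‖w‖)) • w ∈ P := by
      apply hball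
      rw [Metric.mem_ball, dist_eq_norm, add_sub_cancel_left, norm_smul,
        Real.norm_eq_abs, abs_of_pos (div_pos hε (by linarith)), div_mul_eq_mul_div,
        div_lt_iff₀ (by linarith)]
      nlinarith
    have h1 := hplane _ hq
    have h2 := hplane p (interior_subset hp)
    rw [inner_add_left, real_inner_smul_left, real_inner_self_eq_norm_sq, h2] at h1
    have : ε / (2 * ‖w‖) * ‖w‖ ^ 2 = 0 := by linarith
    have hpos : 0 < ε / (2 * ‖w‖) * ‖w‖ ^ 2 :=
      mul_pos (div_pos hε (by linarith)) (pow_pos hwn 2)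
    linarith
  obtain ⟨x₁, hx₁S, hx₁⟩ := hne
  rcases hx₁.lt_or_gt with hlt | hgt
  · -- flip w
    refine grow_core hP hu hx₀ (w := -w) (c := -⟪x₀, w⟫) ?_ ?_ ?_ hx₁S ?_
    · rw [inner_neg_right, huw, neg_zero]
    · intro v hv; rw [inner_neg_right, hVw v hv, neg_zero]
    · intro f hf; rw [inner_neg_right, hc f hf]
    · rw [inner_neg_right]; linarith
  · exact grow_core hP hu hx₀ huw hVw hc hx₁S hgt

lemma to_facet {S : Finset (Euc n)} {P : Set (Euc n)} (hn : 0 < n)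
    (hP : P = convexHull ℝ (S : Set (Euc n))) (hint : (interior P).Nonempty)
    {u : Euc n} (hu : u ≠ 0) :
    ∃ u' : Euc n, u' ≠ 0 ∧ supportSet P u ⊆ supportSet P u' ∧
      finrank ℝ (vectorSpan ℝ (supportSet P u')) + 1 = n := by
  suffices H : ∀ j : ℕ, ∀ u : Euc n, u ≠ 0 →
      n - 1 - finrank ℝ (vectorSpan ℝ (supportSet P u)) ≤ j →
      ∃ u' : Euc n, u' ≠ 0 ∧ supportSet P u ⊆ supportSet P u' ∧
        finrank ℝ (vectorSpan ℝ (supportSet P u')) + 1 = n by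
    exact H _ u hu le_rfl
  intro j
  induction j with
  | zero =>
    intro u hu hj
    have hle := finrank_supportSet_le (P := P) hu
    exact ⟨u, hu, subset_rfl, by omega⟩
  | succ j ih =>
    intro u hu hj
    have hle := finrank_supportSet_le (P := P) hu
    rcases eq_or_lt_of_le hle with heq | hlt
    · exact ⟨u, hu, subset_rfl, by omega⟩
    · have hdim : finrank ℝ (vectorSpan ℝ (supportSet P u)) + 1 < n := by omega
      obtain ⟨u'', hu'', hsub, hrank⟩ := grow hP hint hu hdim
      obtain ⟨u', hu', hsub', hrank'⟩ := ih u'' hu'' (by omega)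
      exact ⟨u', hu', hsub.trans hsub', hrank'⟩

lemma exists_support_ray {P : Set (Euc n)} (hconv : Convex ℝ P) (hcl : IsClosed P)
    {p z : Euc n} (hp : p ∈ interior P) (hz : z ∉ P) :
    ∃ b u₀ : Euc n, u₀ ≠ 0 ∧ b ∈ supportSet P u₀ ∧ ∃ s : ℝ, 0 < s ∧ z = b + s • (b - p) := by
  set γ : ℝ → Euc n := fun t => p + t • (z - p) with hγ
  have hγc : Continuous γ := by continuity
  set A : Set ℝ := Set.Icc (0:ℝ) 1 ∩ γ ⁻¹' P with hA
  have hAcomp : IsCompact A := isCompact_Icc.inter_right (hcl.preimage hγc)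
  have h0A : (0:ℝ) ∈ A := by
    constructor
    · exact Set.mem_Icc.mpr ⟨le_rfl, zero_le_one⟩
    · show γ 0 ∈ P
      simp only [hγ, zero_smul, add_zero]
      exact interior_subset hp
  have hAne : A.Nonempty := ⟨0, h0A⟩
  set t₀ : ℝ := sSup A with ht₀
  have ht₀A : t₀ ∈ A := hAcomp.sSup_mem hAne
  have hbdd : BddAbove A := hAcomp.bddAbove
  obtain ⟨⟨ht₀0, ht₀1⟩, ht₀P⟩ := ht₀A
  set b : Euc n := γ t₀ with hb
  have ht₀lt1 : t₀ < 1 := by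
    rcases lt_or_eq_of_le ht₀1 with h | h
    · exact h
    · exfalso; apply hz
      have : γ 1 ∈ P := by rw [← h]; exact ht₀P
      simpa [hγ] using this
  -- t₀ is positive
  have ht₀pos : 0 < t₀ := by
    have h0int : γ 0 ∈ interior P := by simpa [hγ] using hp
    have : γ ⁻¹' interior P ∈ nhds (0:ℝ) :=
      (isOpen_interior.preimage hγc).mem_nhds h0int
    obtain ⟨δ, hδ, hsub⟩ := Metric.mem_nhds_iff.mp this
    set t₁ : ℝ := min (δ / 2) 1 with ht₁
    have ht₁pos : 0 < t₁ := lt_min (by linarith) one_pos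
    have ht₁A : t₁ ∈ A := by
      constructor
      · exact Set.mem_Icc.mpr ⟨ht₁pos.le, min_le_right _ _⟩
      · have hin : t₁ ∈ γ ⁻¹' interior P := by
          apply hsub
          rw [Metric.mem_ball, dist_zero_right, Real.norm_eq_abs, abs_of_pos ht₁pos]
          calc t₁ ≤ δ / 2 := min_le_left _ _
            _ < δ := by linarith
        exact Set.mem_preimage.mpr (interior_subset (Set.mem_preimage.mp hin))
    exact lt_of_lt_of_le ht₁pos (le_csSup hbdd ht₁A)
  -- b is not interior
  have hbni : b ∉ interior P := by
    intro hbint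
    have : γ ⁻¹' interior P ∈ nhds t₀ :=
      (isOpen_interior.preimage hγc).mem_nhds hbint
    obtain ⟨δ, hδ, hsub⟩ := Metric.mem_nhds_iff.mp this
    set t' : ℝ := min (t₀ + δ / 2) ((t₀ + 1) / 2) with ht'
    have h1 : t₀ < t' := lt_min (by linarith) (by linarith)
    have h2 : t' ≤ 1 := le_trans (min_le_right _ _) (by linarith)
    have h3 : t' ∈ A := by
      constructor
      · exact Set.mem_Icc.mpr ⟨by linarith, h2⟩
      · have hin : t' ∈ γ ⁻¹' interior P := by
          apply hsub
          rw [Metric.mem_ball, Real.dist_eq, abs_of_pos (by linarith)]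
          calc t' - t₀ ≤ t₀ + δ / 2 - t₀ := by
                have := min_le_left (t₀ + δ / 2) ((t₀ + 1) / 2); linarith
            _ < δ := by linarith
        exact Set.mem_preimage.mpr (interior_subset (Set.mem_preimage.mp hin))
    exact absurd (le_csSup hbdd h3) (not_le.mpr h1)
  -- separating functional at b
  obtain ⟨f, hf⟩ := geometric_hahn_banach_open_point (hconv.interior) isOpen_interior hbni
  set u₀ : Euc n := (InnerProductSpace.toDual ℝ (Euc n)).symm f with hu₀
  have hu₀app : ∀ y : Euc n, ⟪y, u₀⟫ = f y := by
    intro y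
    rw [real_inner_comm]
    exact InnerProductSpace.toDual_symm_apply
  have hfp : f p < f b := hf p hp
  have hu₀ne : u₀ ≠ 0 := by
    intro h
    have h1 : f p = 0 := by rw [← hu₀app, h, inner_zero_right]
    have h2 : f b = 0 := by rw [← hu₀app, h, inner_zero_right]
    rw [h1, h2] at hfp; exact lt_irrefl _ hfp
  -- b maximizes f over P
  have hmax : ∀ y ∈ P, f y ≤ f b := by
    intro y hy
    by_contra h
    push_neg at h
    set d₁ : ℝ := f y - f b with hd₁
    set d₂ : ℝ := f y - f p with hd₂
    have hd₁pos : 0 < d₁ := by simp only [hd₁]; linarith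
    have hd₂pos : 0 < d₂ := by simp only [hd₂]; linarith
    have hd₁₂ : d₁ < d₂ := by simp only [hd₁, hd₂]; linarith
    set τ : ℝ := d₁ / (2 * d₂) with hτ
    have hτpos : 0 < τ := div_pos hd₁pos (by linarith)
    have hτlt : τ < 1 := by
      rw [hτ, div_lt_one (by linarith)]; linarith
    have hmem : τ • p + (1 - τ) • y ∈ interior P :=
      hconv.combo_interior_self_mem_interior hp hy hτpos (by linarith) (by ring)
    have := hf _ hmem
    rw [map_add, map_smul, map_smul, smul_eq_mul, smul_eq_mul] at this
    have hval : τ * f p + (1 - τ) * f y = f y - τ * d₂ := by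
      simp only [hd₂]; ring
    rw [hval] at this
    have hτd : τ * d₂ = d₁ / 2 := by
      rw [hτ]; field_simp
    rw [hτd] at this
    simp only [hd₁] at this
    linarith
  have hbsupp : b ∈ supportSet P u₀ :=
    ⟨ht₀P, fun y hy => by rw [hu₀app, hu₀app]; exact hmax y hy⟩
  refine ⟨b, u₀, hu₀ne, hbsupp, (1 - t₀) / t₀, div_pos (by linarith) ht₀pos, ?_⟩
  have hbp : b - p = t₀ • (z - p) := by rw [hb, hγ]; module
  rw [hbp, smul_smul, div_mul_cancel₀ _ (ne_of_gt ht₀pos), hb, hγ]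
  module

end PolySplit

open PolySplit Module in
/-- If every outer unit facet normal of a full-dimensional convex polytope P lies in a
proper nonzero subspace ξ or in its orthogonal complement ξ^⊥, then P is a translate of a
Minkowski sum P₁ + P₂ of polytopes P₁ ⊆ ξ and P₂ ⊆ ξ^⊥. -/
theorem polytope_splits_along_normals {n : ℕ} (P : Set (Euc n))
    (hP : ∃ S : Finset (Euc n), P = convexHull ℝ (S : Set (Euc n)))
    (hint : (interior P).Nonempty)
    (ξ : Submodule ℝ (Euc n)) (hbot : ξ ≠ ⊥) (htop : ξ ≠ ⊤)
    (hnormals : ∀ u : Euc n, IsFacetNormal P u → u ∈ ξ ∨ u ∈ ξᗮ) :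
    ∃ P₁ P₂ : Set (Euc n),
      (∃ S₁ : Finset (Euc n), S₁.Nonempty ∧ P₁ = convexHull ℝ (S₁ : Set (Euc n))) ∧
      (∃ S₂ : Finset (Euc n), S₂.Nonempty ∧ P₂ = convexHull ℝ (S₂ : Set (Euc n))) ∧
      P₁ ⊆ (ξ : Set (Euc n)) ∧ P₂ ⊆ (ξᗮ : Set (Euc n)) ∧
      ∃ v : Euc n, P = transl (P₁ + P₂) v := by
  classical
  have hn : 0 < n := by
    rcases Nat.eq_zero_or_pos n with rfl | h
    · exfalso
      haveI : Subsingleton (Euc 0) := ⟨fun a b => by ext i; exact Fin.elim0 i⟩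
      apply htop
      rw [Submodule.eq_top_iff']
      intro x
      rw [Subsingleton.elim x 0]
      exact ξ.zero_mem
    · exact h
  obtain ⟨S, hP⟩ := hP
  have hSne : S.Nonempty := by
    rcases S.eq_empty_or_nonempty with rfl | h
    · exfalso
      rw [Finset.coe_empty, convexHull_empty] at hP
      obtain ⟨p, hp⟩ := hint
      rw [hP] at hp
      simpa using interior_subset hp
    · exact h
  set π₁ : Euc n → Euc n := fun x => (ξ.orthogonalProjection x : Euc n) with hπ₁
  set π₂ : Euc n → Euc n := fun x => (ξᗮ.orthogonalProjection x : Euc n) with hπ₂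
  have hdecomp : ∀ x : Euc n, π₁ x + π₂ x = x := fun x =>
    ξ.starProjection_add_starProjection_orthogonal x
  set S₁ : Finset (Euc n) := S.image π₁ with hS₁
  set S₂ : Finset (Euc n) := S.image π₂ with hS₂
  set P₁ : Set (Euc n) := convexHull ℝ (S₁ : Set (Euc n)) with hP₁
  set P₂ : Set (Euc n) := convexHull ℝ (S₂ : Set (Euc n)) with hP₂
  have hπ₁mem : ∀ x, π₁ x ∈ ξ := fun x => SetLike.coe_mem _
  have hπ₂mem : ∀ x, π₂ x ∈ ξᗮ := fun x => SetLike.coe_mem _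
  have hP₁ξ : P₁ ⊆ (ξ : Set (Euc n)) := by
    apply convexHull_min ?_ ξ.convex
    rw [hS₁, Finset.coe_image]
    rintro _ ⟨x, _, rfl⟩
    exact hπ₁mem x
  have hP₂ξ : P₂ ⊆ (ξᗮ : Set (Euc n)) := by
    apply convexHull_min ?_ ξᗮ.convex
    rw [hS₂, Finset.coe_image]
    rintro _ ⟨x, _, rfl⟩
    exact hπ₂mem x
  have hSP : (S : Set (Euc n)) ⊆ P := by rw [hP]; exact subset_convexHull ℝ _
  -- orthogonality facts
  have horth : ∀ v ∈ ξ, ∀ w ∈ ξᗮ, ⟪v, w⟫ = 0 := fun v hv w hw =>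
    (Submodule.mem_orthogonal ξ w).mp hw v hv
  -- forward inclusion
  have hfwd : P ⊆ P₁ + P₂ := by
    have hπ₁lin : IsLinearMap ℝ π₁ := ⟨fun x y => by
        simp only [hπ₁, map_add, Submodule.coe_add], fun c x => by
        simp only [hπ₁, map_smul, SetLike.val_smul]⟩
    have hπ₂lin : IsLinearMap ℝ π₂ := ⟨fun x y => by
        simp only [hπ₂, map_add, Submodule.coe_add], fun c x => by
        simp only [hπ₂, map_smul, SetLike.val_smul]⟩
    have hQ : Convex ℝ ({x | π₁ x ∈ P₁} ∩ {x | π₂ x ∈ P₂}) :=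
      ((convex_convexHull ℝ _).is_linear_preimage hπ₁lin).inter
        ((convex_convexHull ℝ _).is_linear_preimage hπ₂lin)
    have hsub : P ⊆ {x | π₁ x ∈ P₁} ∩ {x | π₂ x ∈ P₂} := by
      rw [hP]
      apply convexHull_min ?_ hQ
      intro x hx
      constructor
      · exact subset_convexHull ℝ _ (by rw [hS₁, Finset.coe_image]; exact ⟨x, hx, rfl⟩)
      · exact subset_convexHull ℝ _ (by rw [hS₂, Finset.coe_image]; exact ⟨x, hx, rfl⟩)
    intro x hx
    obtain ⟨h1, h2⟩ := hsub hx
    have h1' : π₁ x ∈ P₁ := h1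
    have h2' : π₂ x ∈ P₂ := h2
    have := Set.add_mem_add h1' h2'
    rwa [hdecomp x] at this
  -- reverse inclusion
  have hrev : P₁ + P₂ ⊆ P := by
    rintro z hz
    rw [Set.mem_add] at hz
    obtain ⟨a, ha, b, hb, rfl⟩ := hz
    by_contra hzP
    have hPconv : Convex ℝ P := hP ▸ convex_convexHull ℝ _
    have hPcl : IsClosed P := hP ▸ (S.finite_toSet.isCompact_convexHull (𝕜 := ℝ)).isClosed
    have hint' := hint
    obtain ⟨p, hp⟩ := hint'
    obtain ⟨b₀, u₀, hu₀, hb₀, s, hs, hzeq⟩ := exists_support_ray hPconv hPcl hp hzP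
    obtain ⟨u', hu'0, hsubs, hrank⟩ := to_facet hn hP hint hu₀
    have hb₀' := hsubs hb₀
    set uhat : Euc n := ‖u'‖⁻¹ • u' with huhat
    have hinv : 0 < ‖u'‖⁻¹ := inv_pos.mpr (norm_pos_iff.mpr hu'0)
    have hsupp : supportSet P uhat = supportSet P u' := supportSet_smul P hinv u'
    have hb₀uhat : b₀ ∈ supportSet P uhat := hsupp ▸ hb₀'
    have huhatnorm : ‖uhat‖ = 1 := norm_smul_inv_norm hu'0
    have huhatne : uhat ≠ 0 := fun h => by simp [h] at huhatnorm
    have hfacet : IsFacetNormal P uhat := by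
      refine ⟨huhatnorm, ?_⟩
      rw [hsupp, vectorSpan_top hint, finrank_top, finrank_euclideanSpace_fin]
      exact hrank
    -- z strictly beats b₀ in direction uhat
    have hgt : ⟪b₀, uhat⟫ < ⟪(a + b : Euc n), uhat⟫ := by
      have hplt : ⟪p, uhat⟫ < ⟪b₀, uhat⟫ := inner_lt_of_interior hp huhatne hb₀uhat
      have : ⟪(a + b : Euc n), uhat⟫ = ⟪b₀, uhat⟫ + s * (⟪b₀, uhat⟫ - ⟪p, uhat⟫) := by
        rw [hzeq, inner_add_left, real_inner_smul_left, inner_sub_left]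
      rw [this]
      nlinarith
    rcases hnormals uhat hfacet with hξ | hξ'
    · have hbz : ⟪b, uhat⟫ = 0 := by
        rw [real_inner_comm]; exact horth uhat hξ b (hP₂ξ hb)
      have ha' : ⟪a, uhat⟫ ≤ ⟪b₀, uhat⟫ := by
        apply hull_inner_le (fun y hy => ?_) ha
        rw [hS₁, Finset.mem_image] at hy
        obtain ⟨x, hxS, rfl⟩ := hy
        have h0 : ⟪π₂ x, uhat⟫ = 0 := by
          rw [real_inner_comm]; exact horth uhat hξ _ (hπ₂mem x)
        have hx' : ⟪x, uhat⟫ ≤ ⟪b₀, uhat⟫ := hb₀uhat.2 x (hSP hxS)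
        have : ⟪π₁ x, uhat⟫ + ⟪π₂ x, uhat⟫ = ⟪x, uhat⟫ := by
          rw [← inner_add_left, hdecomp x]
        linarith
      rw [inner_add_left, hbz] at hgt
      linarith
    · have haz : ⟪a, uhat⟫ = 0 := horth a (hP₁ξ ha) uhat hξ'
      have hb' : ⟪b, uhat⟫ ≤ ⟪b₀, uhat⟫ := by
        apply hull_inner_le (fun y hy => ?_) hb
        rw [hS₂, Finset.mem_image] at hy
        obtain ⟨x, hxS, rfl⟩ := hy
        have h0 : ⟪π₁ x, uhat⟫ = 0 := horth _ (hπ₁mem x) uhat hξ'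
        have hx' : ⟪x, uhat⟫ ≤ ⟪b₀, uhat⟫ := hb₀uhat.2 x (hSP hxS)
        have : ⟪π₁ x, uhat⟫ + ⟪π₂ x, uhat⟫ = ⟪x, uhat⟫ := by
          rw [← inner_add_left, hdecomp x]
        linarith
      rw [inner_add_left, haz] at hgt
      linarith
  refine ⟨P₁, P₂, ⟨S₁, hSne.image π₁, rfl⟩, ⟨S₂, hSne.image π₂, rfl⟩, hP₁ξ, hP₂ξ, 0, ?_⟩
  have : transl (P₁ + P₂) 0 = P₁ + P₂ := by
    unfold transl
    have h : (fun x : Euc n => x + 0) = id := funext fun x => add_zero x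
    rw [h, Set.image_id]
  rw [this]
  exact Set.Subset.antisymm hfwd hrev
end
end

section
/- Let T be a regular tetrahedron in ℝ³ with edge length √3 and let B be the closed Euclidean unit ball in ℝ³. Then for every unit vector u, the orthogonal projection B_u (a disk of unit radius, hence containing a disk of unit diameter) contains a translate of the projection T_u; nevertheless, B does not contain any translate of T. -/
open scoped Pointwise RealInnerProductSpace
noncomputable section
set_option maxHeartbeats 1000000

section AuxLemmas

lemma core_jung_ineq (E G F : ℝ) (hF : 0 < F) (hFE : F < E) (hFG : F < G) (hE : E ≤ 3) (hG : G ≤ 3)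
    (hx : E + G - 2*F ≤ 3) : E*G*(E+G-2*F) ≤ 4*(E*G - F^2) := by
  nlinarith [mul_pos (sub_pos.2 hFE) (sub_pos.2 hFG), mul_nonneg (sub_nonneg.2 hE) (sub_nonneg.2 hG),
    mul_pos hF (sub_pos.2 hFE), mul_pos hF (sub_pos.2 hFG), sq_nonneg (E - G), sq_nonneg (E + G - 2*F),
    mul_nonneg (mul_nonneg (sub_nonneg.2 hE) (sub_nonneg.2 hG)) hF.le,
    mul_nonneg (sub_nonneg.2 hx) (mul_pos (sub_pos.2 hFE) (sub_pos.2 hFG)).le,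
    mul_nonneg (sub_nonneg.2 hx) (mul_pos hF (sub_pos.2 hFE)).le,
    mul_nonneg (sub_nonneg.2 hx) (mul_pos hF (sub_pos.2 hFG)).le]

variable {V : Type*} [NormedAddCommGroup V] [InnerProductSpace ℝ V]

/-- Jung's theorem for three points with pairwise squared distances at most 3. -/
lemma jung_three (A B C : V) (hAB : ‖B - A‖^2 ≤ 3) (hAC : ‖C - A‖^2 ≤ 3)
    (hBC : ‖C - B‖^2 ≤ 3) :
    ∃ c : V, ‖A - c‖ ≤ 1 ∧ ‖B - c‖ ≤ 1 ∧ ‖C - c‖ ≤ 1 := by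
  set e := B - A with he
  set f := C - A with hf
  set En := ‖e‖^2 with hEn
  set Gn := ‖f‖^2 with hGn
  set Fn := ⟪e, f⟫ with hFn
  have hEn0 : 0 ≤ En := sq_nonneg _
  have hGn0 : 0 ≤ Gn := sq_nonneg _
  have hfe : f - e = C - B := by rw [he, hf]; abel
  have hx : En + Gn - 2*Fn ≤ 3 := by
    have h : ‖f - e‖^2 = Gn - 2*⟪f,e⟫ + En := by
      rw [hGn, hEn, ← norm_sub_sq_real]
    rw [hfe] at h
    rw [real_inner_comm] at h
    linarith [h.symm.trans_le hBC]
  have hx0 : 0 ≤ En + Gn - 2*Fn := by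
    have h0 : (0:ℝ) ≤ ‖f - e‖^2 := sq_nonneg _
    have h : ‖f - e‖^2 = Gn - 2*⟪f,e⟫ + En := by
      rw [hGn, hEn, ← norm_sub_sq_real]
    rw [real_inner_comm] at h
    linarith [h ▸ h0]
  have key : ∀ β γ : ℝ, ‖β•e + γ•f‖^2 = β^2*En + 2*β*γ*Fn + γ^2*Gn := by
    intro β γ
    rw [norm_add_sq_real, real_inner_smul_left, real_inner_smul_right, norm_smul, norm_smul]
    simp [mul_pow, sq_abs, hEn, hGn]
    ring
  have dists : ∀ β γ : ℝ,
      ‖A - (A + β•e + γ•f)‖^2 = β^2*En + 2*β*γ*Fn + γ^2*Gn ∧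
      ‖B - (A + β•e + γ•f)‖^2 = (1-β)^2*En + 2*(1-β)*(-γ)*Fn + (-γ)^2*Gn ∧
      ‖C - (A + β•e + γ•f)‖^2 = (-β)^2*En + 2*(-β)*(1-γ)*Fn + (1-γ)^2*Gn := by
    intro β γ
    refine ⟨?_, ?_, ?_⟩
    · have h : A - (A + β•e + γ•f) = (-β)•e + (-γ)•f := by module
      rw [h, key]; ring
    · have h : B - (A + β•e + γ•f) = (1-β)•e + (-γ)•f := by rw [he]; module
      rw [h, key]
    · have h : C - (A + β•e + γ•f) = (-β)•e + (1-γ)•f := by rw [hf]; module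
      rw [h, key]
  have sqle : ∀ z : V, ‖z‖^2 ≤ 1 → ‖z‖ ≤ 1 := by
    intro z h; nlinarith [norm_nonneg z]
  suffices h : ∃ β γ : ℝ, β^2*En + 2*β*γ*Fn + γ^2*Gn ≤ 1 ∧
      (1-β)^2*En + 2*(1-β)*(-γ)*Fn + (-γ)^2*Gn ≤ 1 ∧
      (-β)^2*En + 2*(-β)*(1-γ)*Fn + (1-γ)^2*Gn ≤ 1 by
    obtain ⟨β, γ, h1, h2, h3⟩ := h
    obtain ⟨d1, d2, d3⟩ := dists β γ
    exact ⟨A + β•e + γ•f, sqle _ (d1.le.trans h1), sqle _ (d2.le.trans h2),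
      sqle _ (d3.le.trans h3)⟩
  rcases le_or_gt Fn 0 with hF | hF
  · exact ⟨1/2, 1/2, by nlinarith, by nlinarith, by nlinarith⟩
  rcases le_or_gt En Fn with hE | hE
  · exact ⟨0, 1/2, by nlinarith, by nlinarith, by nlinarith⟩
  rcases le_or_gt Gn Fn with hG | hG
  · exact ⟨1/2, 0, by nlinarith, by nlinarith, by nlinarith⟩
  have hEn3 : En ≤ 3 := by rw [hEn, he]; exact hAB
  have hGn3 : Gn ≤ 3 := by rw [hGn, hf]; exact hAC
  have hD : 0 < En*Gn - Fn^2 := by nlinarith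
  have hcore := core_jung_ineq En Gn Fn hF hE hG hEn3 hGn3 hx
  set D := 2*(En*Gn - Fn^2) with hDdef
  have hD2 : 0 < D := by positivity
  refine ⟨Gn*(En-Fn)/D, En*(Gn-Fn)/D, ?_, ?_, ?_⟩
  · have hid : (Gn*(En-Fn)/D)^2*En + 2*(Gn*(En-Fn)/D)*(En*(Gn-Fn)/D)*Fn + (En*(Gn-Fn)/D)^2*Gn
        = En*Gn*(En+Gn-2*Fn)*(En*Gn-Fn^2)/D^2 := by
      rw [hDdef]; field_simp [hD.ne', (by rw [mul_comm]; exact hD.ne' : Gn*En - Fn^2 ≠ 0)]; ring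
    rw [hid, div_le_one (by positivity)]
    calc En*Gn*(En+Gn-2*Fn)*(En*Gn-Fn^2) ≤ 4*(En*Gn-Fn^2)*(En*Gn-Fn^2) := by
          apply mul_le_mul_of_nonneg_right hcore hD.le
      _ = D^2 := by rw [hDdef]; ring
  · have hid : (1-Gn*(En-Fn)/D)^2*En + 2*(1-Gn*(En-Fn)/D)*(-(En*(Gn-Fn)/D))*Fn + (-(En*(Gn-Fn)/D))^2*Gn
        = En*Gn*(En+Gn-2*Fn)*(En*Gn-Fn^2)/D^2 := by
      rw [hDdef]; field_simp [hD.ne', (by rw [mul_comm]; exact hD.ne' : Gn*En - Fn^2 ≠ 0)]; ring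
    rw [hid, div_le_one (by positivity)]
    calc En*Gn*(En+Gn-2*Fn)*(En*Gn-Fn^2) ≤ 4*(En*Gn-Fn^2)*(En*Gn-Fn^2) := by
          apply mul_le_mul_of_nonneg_right hcore hD.le
      _ = D^2 := by rw [hDdef]; ring
  · have hid : (-(Gn*(En-Fn)/D))^2*En + 2*(-(Gn*(En-Fn)/D))*(1-En*(Gn-Fn)/D)*Fn + (1-En*(Gn-Fn)/D)^2*Gn
        = En*Gn*(En+Gn-2*Fn)*(En*Gn-Fn^2)/D^2 := by
      rw [hDdef]; field_simp [hD.ne', (by rw [mul_comm]; exact hD.ne' : Gn*En - Fn^2 ≠ 0)]; ring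
    rw [hid, div_le_one (by positivity)]
    calc En*Gn*(En+Gn-2*Fn)*(En*Gn-Fn^2) ≤ 4*(En*Gn-Fn^2)*(En*Gn-Fn^2) := by
          apply mul_le_mul_of_nonneg_right hcore hD.le
      _ = D^2 := by rw [hDdef]; ring

end AuxLemmas


/-- The regular tetrahedron T of edge length √3 can hide behind the unit ball B in ℝ³
(every shadow of B contains a translate of the corresponding shadow of T), yet T cannot
hide inside B. -/
theorem tetrahedron_hides_behind_ball (p : Fin 4 → Euc 3)
    (hdist : ∀ i j, i ≠ j → dist (p i) (p j) = Real.sqrt 3) :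
    (∀ u : Euc 3, ‖u‖ = 1 →
      ∃ w, transl (projSet (ℝ ∙ u)ᗮ (convexHull ℝ (Set.range p))) w ⊆
        projSet (ℝ ∙ u)ᗮ (Metric.closedBall (0 : Euc 3) 1)) ∧
    ¬ ∃ v, transl (convexHull ℝ (Set.range p)) v ⊆ Metric.closedBall (0 : Euc 3) 1 := by
  constructor
  · -- shadows part
    intro u hu
    have hu0 : u ≠ 0 := by
      intro h; rw [h] at hu; simp at hu
    set ξ : Submodule ℝ (Euc 3) := (ℝ ∙ u)ᗮ with hξ
    set q : Fin 4 → ξ := fun i => ξ.orthogonalProjection (p i) with hq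
    have hqd : ∀ i j : Fin 4, i ≠ j → ‖q i - q j‖^2 ≤ 3 := by
      intro i j hij
      have h1 : ‖q i - q j‖ = ‖(ξ.orthogonalProjection (p i - p j) : Euc 3)‖ := by
        rw [hq]; simp [map_sub]
      have h2 : ‖(ξ.orthogonalProjection (p i - p j) : Euc 3)‖ ≤ ‖p i - p j‖ := by
        calc ‖(ξ.orthogonalProjection (p i - p j) : Euc 3)‖
            ≤ ‖ξ.orthogonalProjection‖ * ‖p i - p j‖ := ξ.orthogonalProjection.le_opNorm _
          _ ≤ 1 * ‖p i - p j‖ :=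
              mul_le_mul_of_nonneg_right (Submodule.orthogonalProjectionOnto_norm_le ξ) (norm_nonneg _)
          _ = ‖p i - p j‖ := one_mul _
      have h3 : ‖p i - p j‖ = Real.sqrt 3 := by rw [← dist_eq_norm]; exact hdist i j hij
      have h4 : ‖q i - q j‖ ≤ Real.sqrt 3 := by rw [h1]; rw [h3] at h2; exact h2
      calc ‖q i - q j‖^2 ≤ (Real.sqrt 3)^2 := by
            apply pow_le_pow_left₀ (norm_nonneg _) h4
        _ = 3 := Real.sq_sqrt (by norm_num)
    have hrank : Module.finrank ℝ ξ = 2 := by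
      rw [hξ]
      have h1 : Module.finrank ℝ (ℝ ∙ u) = 1 := finrank_span_singleton hu0
      have h2 := Submodule.finrank_add_finrank_orthogonal (K := (ℝ ∙ u))
      have h3 : Module.finrank ℝ (Euc 3) = 3 := finrank_euclideanSpace_fin
      rw [h1, h3] at h2
      omega
    have hhelly : (⋂ i ∈ (Finset.univ : Finset (Fin 4)), Metric.closedBall (q i) 1).Nonempty := by
      apply Convex.helly_theorem (𝕜 := ℝ)
      · rw [hrank]; simp
      · intro i _; exact convex_closedBall _ _
      · intro I _ hcard
        rw [hrank] at hcard
        obtain ⟨a, b, c, hab, hac, hbc, rfl⟩ := Finset.card_eq_three.mp hcard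
        obtain ⟨ctr, h1, h2, h3⟩ := jung_three (q a) (q b) (q c)
          (hqd b a (Ne.symm hab)) (hqd c a (Ne.symm hac)) (hqd c b (Ne.symm hbc))
        refine ⟨ctr, ?_⟩
        simp only [Finset.mem_insert, Finset.mem_singleton, Set.mem_iInter,
          Metric.mem_closedBall]
        rintro i (rfl | rfl | rfl)
        · rw [dist_comm, dist_eq_norm]; exact h1
        · rw [dist_comm, dist_eq_norm]; exact h2
        · rw [dist_comm, dist_eq_norm]; exact h3
    obtain ⟨ctr, hctr⟩ := hhelly
    simp only [Set.mem_iInter, Metric.mem_closedBall, Finset.mem_univ, forall_const] at hctr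
    refine ⟨-(ctr : Euc 3), ?_⟩
    have hL : projSet ξ (convexHull ℝ (Set.range p))
        = convexHull ℝ (Set.range (fun i => ((ξ.orthogonalProjection (p i) : Euc 3)))) := by
      have h0 : projSet ξ (convexHull ℝ (Set.range p))
          = (ξ.subtype.comp ξ.orthogonalProjection.toLinearMap) '' (convexHull ℝ (Set.range p)) := rfl
      rw [h0, LinearMap.image_convexHull, ← Set.range_comp]
      rfl
    have hsub : projSet ξ (convexHull ℝ (Set.range p))
        ⊆ (ξ : Set (Euc 3)) ∩ Metric.closedBall ((ctr : Euc 3)) 1 := by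
      rw [hL]
      apply convexHull_min
      · rintro _ ⟨i, rfl⟩
        refine ⟨(q i).2, ?_⟩
        simp only [Metric.mem_closedBall]
        have : dist ((q i : Euc 3)) ((ctr : Euc 3)) = dist (q i) ctr := rfl
        rw [this, dist_comm]
        exact hctr i
      · exact (ξ.convex).inter (convex_closedBall _ _)
    rintro z ⟨y, hy, rfl⟩
    obtain ⟨hy1, hy2⟩ := hsub hy
    rw [Metric.mem_closedBall] at hy2
    refine ⟨y - (ctr : Euc 3), ?_, ?_⟩
    · rw [Metric.mem_closedBall, dist_zero_right, ← dist_eq_norm]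
      exact hy2
    · have hmem : y - (ctr : Euc 3) ∈ ξ := ξ.sub_mem hy1 ctr.2
      show ((ξ.orthogonalProjection (y - (ctr : Euc 3)) : Euc 3)) = y + -(ctr : Euc 3)
      rw [show ((ξ.orthogonalProjection (y - (ctr : Euc 3)) : Euc 3)) = y - (ctr : Euc 3) from
        Submodule.starProjection_eq_self_iff.mpr hmem, sub_eq_add_neg]
  · -- cannot fit inside the ball
    rintro ⟨v, hv⟩
    set w : Fin 4 → Euc 3 := fun i => p i + v with hw
    have hq : ∀ i : Fin 4, ‖w i‖ ≤ 1 := by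
      intro i
      have hmem : p i + v ∈ transl (convexHull ℝ (Set.range p)) v :=
        ⟨p i, subset_convexHull ℝ _ ⟨i, rfl⟩, rfl⟩
      have := hv hmem
      rwa [Metric.mem_closedBall, dist_zero_right] at this
    have hn : ∀ i : Fin 4, ‖w i‖^2 ≤ 1 := by
      intro i; nlinarith [hq i, norm_nonneg (w i)]
    have key : ∀ i j : Fin 4, i ≠ j →
        ‖w i‖^2 - 2*⟪w i, w j⟫ + ‖w j‖^2 = 3 := by
      intro i j hij
      rw [← norm_sub_sq_real]
      have h1 : w i - w j = p i - p j := by rw [hw]; exact add_sub_add_right_eq_sub (p i) (p j) v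
      rw [h1, ← dist_eq_norm, hdist i j hij, Real.sq_sqrt] <;> norm_num
    have hS : (0:ℝ) ≤ ⟪w 0 + (w 1 + (w 2 + w 3)),
        w 0 + (w 1 + (w 2 + w 3))⟫ := real_inner_self_nonneg
    simp only [inner_add_left, inner_add_right, real_inner_self_eq_norm_sq] at hS
    have c01 : (0:Fin 4) ≠ 1 := by decide
    have c02 : (0:Fin 4) ≠ 2 := by decide
    have c03 : (0:Fin 4) ≠ 3 := by decide
    have c12 : (1:Fin 4) ≠ 2 := by decide
    have c13 : (1:Fin 4) ≠ 3 := by decide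
    have c23 : (2:Fin 4) ≠ 3 := by decide
    linarith [key 0 1 c01, key 0 2 c02, key 0 3 c03, key 1 2 c12, key 1 3 c13, key 2 3 c23,
      hn 0, hn 1, hn 2, hn 3, hS,
      real_inner_comm (w 0) (w 1), real_inner_comm (w 0) (w 2),
      real_inner_comm (w 0) (w 3), real_inner_comm (w 1) (w 2),
      real_inner_comm (w 1) (w 3), real_inner_comm (w 2) (w 3)]
end
end
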